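/- arXiv:1107.3493 — 7 statements merged into one kernel-verified Lean document; each statement's English description precedes it below -/
import Mathlib

section
/- Let X be a compact Hausdorff topological space, let n be a natural number, and let g_0,…,g_n and g_{n+1} be real-valued continuous functions on X. Suppose there exists (λ_0,…,λ_n) ∈ ℝ^{n+1} such that Σ_{i=0}^n λ_i g_i(x) > 0 for every x ∈ X, and let c = (c_0,…,c_n) ∈ ℝ^{n+1} be such that M_c ≠ ∅. Then there exists a measure μ_max ∈ M_c whose support has cardinality at most n+1 and such that ∫_X g_{n+1} dμ_max ≥ ∫_X g_{n+1} dμ for every μ ∈ M_c. -/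
open MeasureTheory

/-- The support of a Borel measure: the set of points all of whose open
neighborhoods have positive measure. -/
def measSupport {X : Type*} [TopologicalSpace X] [MeasurableSpace X]
    (μ : Measure X) : Set X :=
  {x | ∀ U : Set X, IsOpen U → x ∈ U → 0 < μ U}

lemma aux_fst_sum {ι M N : Type*} [AddCommMonoid M] [AddCommMonoid N] (s : Finset ι)
    (f : ι → M × N) : (∑ i ∈ s, f i).1 = ∑ i ∈ s, (f i).1 :=
  map_sum (AddMonoidHom.fst M N) f s

lemma aux_snd_sum {ι M N : Type*} [AddCommMonoid M] [AddCommMonoid N] (s : Finset ι)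
    (f : ι → M × N) : (∑ i ∈ s, f i).2 = ∑ i ∈ s, (f i).2 :=
  map_sum (AddMonoidHom.snd M N) f s

lemma aux_integrable {X : Type*} [TopologicalSpace X] [CompactSpace X] [Nonempty X]
    [MeasurableSpace X] [OpensMeasurableSpace X] {F : Type*} [NormedAddCommGroup F] [SecondCountableTopology F]
    {f : X → F} (hf : Continuous f) (μ : Measure X) [IsFiniteMeasure μ] : Integrable f μ := by
  obtain ⟨x0, -, hx0⟩ := IsCompact.exists_isMaxOn isCompact_univ Set.univ_nonempty
    hf.norm.continuousOn
  exact (integrable_const (‖f x0‖)).mono' hf.aestronglyMeasurable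
    (ae_of_all _ fun x => hx0 (Set.mem_univ x))

lemma aux_sum_pad {ι κ M : Type*} [Fintype ι] [Fintype κ] [AddCommMonoid M] (e : ι ↪ κ)
    (f : κ → M) (hf : ∀ j, (¬∃ i, e i = j) → f j = 0) : ∑ j, f j = ∑ i, f (e i) := by
  rw [← Finset.sum_map Finset.univ e f]
  apply (Finset.sum_subset (Finset.subset_univ _) _).symm
  intro j _ hj
  apply hf
  intro ⟨i, hi⟩
  exact hj (Finset.mem_map.mpr ⟨i, Finset.mem_univ i, hi⟩)

lemma aux_isCompact_convexHull {E : Type*} [NormedAddCommGroup E] [NormedSpace ℝ E]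
    [FiniteDimensional ℝ E] {V : Set E} (hV : IsCompact V) :
    IsCompact (convexHull ℝ V) := by
  classical
  set d : ℕ := Module.finrank ℝ E + 1 with hd
  have key : convexHull ℝ V =
      (fun p : (Fin d → ℝ) × (Fin d → E) => ∑ i, p.1 i • p.2 i) ''
        (stdSimplex ℝ (Fin d) ×ˢ Set.univ.pi fun _ : Fin d => V) := by
    apply Set.Subset.antisymm
    · intro x hx
      obtain ⟨ι, hι, z, w, hrange, haff, hw, hw1, hsum⟩ :=
        eq_pos_convex_span_of_mem_convexHull hx
      have hne : Nonempty ι := by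
        by_contra h
        rw [not_nonempty_iff] at h
        rw [Finset.sum_of_isEmpty] at hw1
        norm_num at hw1
      have hcard : Fintype.card ι ≤ d := by
        have h1 := haff.finrank_vectorSpan_add_one
        have h2 : Module.finrank ℝ (vectorSpan ℝ (Set.range z)) ≤ Module.finrank ℝ E :=
          Submodule.finrank_le _
        omega
      obtain ⟨e⟩ : Nonempty (ι ↪ Fin d) := by
        apply Function.Embedding.nonempty_of_card_le
        simpa using hcard
      set w' : Fin d → ℝ := fun j => if h : ∃ i, e i = j then w h.choose else 0 with hw'
      set z' : Fin d → E := fun j => if h : ∃ i, e i = j then z h.choose else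
        z (Classical.arbitrary ι) with hz'
      have hch : ∀ i : ι, w' (e i) = w i ∧ z' (e i) = z i := by
        intro i
        have hex : ∃ i', e i' = e i := ⟨i, rfl⟩
        have hc : hex.choose = i := e.injective hex.choose_spec
        constructor
        · show dite (∃ i', e i' = e i) (fun h => w h.choose) (fun _ => 0) = w i
          rw [dif_pos hex, hc]
        · show dite (∃ i', e i' = e i) (fun h => z h.choose) (fun _ => z (Classical.arbitrary ι))
            = z i
          rw [dif_pos hex, hc]
      have hw'0 : ∀ j, (¬∃ i, e i = j) → w' j = 0 := by
        intro j hj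
        simp only [hw', dif_neg hj]
      refine ⟨(w', z'), ⟨⟨fun j => ?_, ?_⟩, fun j _ => ?_⟩, ?_⟩
      · show 0 ≤ w' j
        by_cases h : ∃ i, e i = j
        · obtain ⟨i, rfl⟩ := h
          rw [(hch i).1]
          exact (hw i).le
        · rw [hw'0 j h]
      · show ∑ j, w' j = 1
        rw [aux_sum_pad e w' hw'0]
        rw [← hw1]
        exact Finset.sum_congr rfl fun i _ => (hch i).1
      · show z' j ∈ V
        by_cases h : ∃ i, e i = j
        · obtain ⟨i, rfl⟩ := h
          rw [(hch i).2]
          exact hrange (Set.mem_range_self i)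
        · simp only [hz', dif_neg h]
          exact hrange (Set.mem_range_self _)
      · show ∑ j, w' j • z' j = x
        rw [aux_sum_pad e (fun j => w' j • z' j) (fun j hj => by show w' j • z' j = 0; rw [hw'0 j hj, zero_smul])]
        rw [← hsum]
        exact Finset.sum_congr rfl fun i _ => by rw [(hch i).1, (hch i).2]
    · rintro x ⟨⟨w, z⟩, ⟨⟨hw0, hw1⟩, hz⟩, rfl⟩
      have := Finset.univ.centerMass_mem_convexHull (w := w) (z := z)
        (fun i _ => hw0 i) (by rw [hw1]; exact one_pos) (fun i _ => hz i (Set.mem_univ i))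
      rwa [Finset.centerMass_eq_of_sum_1 _ _ hw1] at this
  rw [key]
  apply IsCompact.image
  · exact (isCompact_stdSimplex _ _).prod (isCompact_univ_pi fun _ => hV)
  · exact continuous_finset_sum _ fun i _ =>
      ((continuous_apply i).comp continuous_fst).smul ((continuous_apply i).comp continuous_snd)


/-- Carathéodory principle: if `X` is compact Hausdorff, some polynomial
`∑ λ_i g_i` is strictly positive on `X`, and the moment set `M_c` is nonempty,
then `∫ g_{n+1} dμ` attains its maximum over `M_c` at a measure whose support
has cardinality at most `n + 1`. -/
theorem caratheodory_principle {X : Type*} [TopologicalSpace X] [CompactSpace X]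
    [T2Space X] [MeasurableSpace X] [BorelSpace X]
    (n : ℕ) (g : Fin (n + 1) → X → ℝ) (gtop : X → ℝ)
    (hg : ∀ i, Continuous (g i)) (hgtop : Continuous gtop)
    (lam : Fin (n + 1) → ℝ) (hlam : ∀ x : X, 0 < ∑ i, lam i * g i x)
    (c : Fin (n + 1) → ℝ)
    (hne : ∃ μ : Measure X, (∀ i, Integrable (g i) μ) ∧ ∀ i, ∫ x, g i x ∂μ = c i) :
    ∃ μmax : Measure X,
      ((∀ i, Integrable (g i) μmax) ∧ ∀ i, ∫ x, g i x ∂μmax = c i) ∧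
      (measSupport μmax).encard ≤ n + 1 ∧
      ∀ μ : Measure X, ((∀ i, Integrable (g i) μ) ∧ ∀ i, ∫ x, g i x ∂μ = c i) →
        ∫ x, gtop x ∂μ ≤ ∫ x, gtop x ∂μmax := by
  classical
  rcases isEmpty_or_nonempty X with hX | hX
  · obtain ⟨μ0, hint, hmom⟩ := hne
    refine ⟨μ0, ⟨hint, hmom⟩, ?_, ?_⟩
    · have h : measSupport μ0 = ∅ := Set.eq_empty_of_isEmpty _
      simp [h]
    · intro μ _
      simp [integral_of_isEmpty]
  -- Notation
  set P : X → (Fin (n + 1) → ℝ) × ℝ := fun x => (fun i => g i x, gtop x) with hP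
  have hg1c : Continuous fun x => (fun i => g i x : Fin (n + 1) → ℝ) := continuous_pi hg
  have hPc : Continuous P := hg1c.prodMk hgtop
  -- every admissible measure is finite
  have hfin : ∀ μ : Measure X, (∀ i, Integrable (g i) μ) → IsFiniteMeasure μ := by
    intro μ hint
    have hhc : Continuous (fun x => ∑ i, lam i * g i x) :=
      continuous_finset_sum _ fun i _ => continuous_const.mul (hg i)
    obtain ⟨x0, -, hx0⟩ := IsCompact.exists_isMinOn isCompact_univ Set.univ_nonempty
      hhc.continuousOn
    have hhint : Integrable (fun x => ∑ i, lam i * g i x) μ :=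
      integrable_finset_sum _ fun i _ => (hint i).const_mul _
    have hlt := hhint.measure_ge_lt_top (hlam x0)
    constructor
    refine lt_of_le_of_lt (measure_mono fun x _ => ?_) hlt
    exact hx0 (Set.mem_univ x)
  -- the compact convex set K and the cone C
  set K := convexHull ℝ (P '' Set.univ) with hKdef
  have hKcomp : IsCompact K := aux_isCompact_convexHull (isCompact_univ.image hPc)
  have hKconv : Convex ℝ K := convex_convexHull ℝ _
  have hPK : ∀ x : X, P x ∈ K := fun x => subset_convexHull _ _ ⟨x, trivial, rfl⟩
  have hKne : K.Nonempty := ⟨P (Classical.arbitrary X), hPK _⟩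
  set C : Set ((Fin (n + 1) → ℝ) × ℝ) := {y | ∃ r : ℝ, 0 ≤ r ∧ ∃ u ∈ K, y = r • u} with hCdef
  -- the positive functional
  set Λ : (Fin (n + 1) → ℝ) × ℝ → ℝ := fun y => ∑ i, lam i * y.1 i with hΛdef
  have hΛlin : IsLinearMap ℝ Λ := by
    constructor
    · intro a b
      simp [hΛdef, mul_add, Finset.sum_add_distrib]
    · intro r a
      simp [hΛdef, Finset.mul_sum, mul_left_comm]
  obtain ⟨x0, -, hx0⟩ := IsCompact.exists_isMinOn isCompact_univ Set.univ_nonempty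
    (continuous_finset_sum Finset.univ fun i _ =>
      continuous_const.mul (hg i) : Continuous fun x => ∑ i, lam i * g i x).continuousOn
  set ε : ℝ := ∑ i, lam i * g i x0 with hεdef
  have hε : 0 < ε := hlam x0
  have hKε : ∀ u ∈ K, ε ≤ Λ u := by
    intro u hu
    have hsub : P '' Set.univ ⊆ {y | ε ≤ Λ y} := by
      rintro - ⟨x, -, rfl⟩
      exact hx0 (Set.mem_univ x)
    exact convexHull_min hsub (convex_halfSpace_ge hΛlin ε) hu
  -- discrete combinations lie in the cone
  have hDC : ∀ (s : Finset X) (a : X → ℝ), (∀ x ∈ s, 0 ≤ a x) →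
      ∑ x ∈ s, a x • P x ∈ C := by
    intro s a ha
    by_cases h0 : ∑ x ∈ s, a x = 0
    · have hz : ∀ x ∈ s, a x = 0 := (Finset.sum_eq_zero_iff_of_nonneg ha).mp h0
      have : ∑ x ∈ s, a x • P x = 0 :=
        Finset.sum_eq_zero fun x hx => by rw [hz x hx, zero_smul]
      exact ⟨0, le_refl 0, hKne.choose, hKne.choose_spec, by rw [this, zero_smul]⟩
    · have hpos : 0 < ∑ x ∈ s, a x := lt_of_le_of_ne (Finset.sum_nonneg ha) (Ne.symm h0)
      refine ⟨∑ x ∈ s, a x, hpos.le, s.centerMass a P,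
        s.centerMass_mem_convexHull ha hpos (fun x _ => ⟨x, trivial, rfl⟩), ?_⟩
      rw [Finset.centerMass, smul_inv_smul₀ h0]
  -- integrals of P
  have hI : ∀ (μ : Measure X), IsFiniteMeasure μ →
      ∫ x, P x ∂μ = ((fun i => ∫ x, g i x ∂μ), ∫ x, gtop x ∂μ) := by
    intro μ hμfin
    have hintP : Integrable P μ := aux_integrable hPc μ
    have hint1 : Integrable (fun x => (fun i => g i x : Fin (n + 1) → ℝ)) μ :=
      aux_integrable hg1c μ
    refine Prod.ext ?_ ?_
    · have e1 := (ContinuousLinearMap.fst ℝ (Fin (n + 1) → ℝ) ℝ).integral_comp_comm hintP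
      simp only [ContinuousLinearMap.coe_fst'] at e1
      rw [← e1]
      funext i
      have e2 := (ContinuousLinearMap.proj (R := ℝ) (φ := fun _ : Fin (n + 1) => ℝ) i
        ).integral_comp_comm hint1
      simp only [ContinuousLinearMap.proj_apply] at e2
      exact e2.symm
    · have e1 := (ContinuousLinearMap.snd ℝ (Fin (n + 1) → ℝ) ℝ).integral_comp_comm hintP
      simp only [ContinuousLinearMap.coe_snd'] at e1
      exact e1.symm
  -- admissible measures give points of the cone
  have hμC : ∀ μ : Measure X, (∀ i, Integrable (g i) μ) → (∀ i, ∫ x, g i x ∂μ = c i) →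
      ((c, ∫ x, gtop x ∂μ) : (Fin (n + 1) → ℝ) × ℝ) ∈ C := by
    intro μ hint hmom
    haveI := hfin μ hint
    by_cases hμ0 : μ = 0
    · have hc0 : c = fun _ => (0 : ℝ) := by
        funext i
        rw [← hmom i, hμ0, integral_zero_measure]
      refine ⟨0, le_refl 0, hKne.choose, hKne.choose_spec, ?_⟩
      rw [hμ0, integral_zero_measure, zero_smul, hc0]
      rfl
    · haveI : NeZero μ := ⟨hμ0⟩
      have havg : ⨍ x, P x ∂μ ∈ K :=
        hKconv.average_mem hKcomp.isClosed (ae_of_all _ fun x => hPK x) (aux_integrable hPc μ)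
      refine ⟨(μ Set.univ).toReal, ENNReal.toReal_nonneg, _, havg, ?_⟩
      rw [← measureReal_def, measure_smul_average, hI μ inferInstance]
      exact Prod.ext (funext fun i => (hmom i).symm) rfl
  -- the feasible value set T and its maximum
  set T : Set ℝ := {t | ((c, t) : (Fin (n + 1) → ℝ) × ℝ) ∈ C} with hTdef
  obtain ⟨μ0, hμ0int, hμ0mom⟩ := hne
  have hTne : T.Nonempty := ⟨∫ x, gtop x ∂μ0, hμC μ0 hμ0int hμ0mom⟩
  have hTcomp : IsCompact T := by
    set L : ℝ := ∑ i, lam i * c i with hLdef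
    set B : ℝ := max (L / ε) 0 with hBdef
    set S := (fun p : ℝ × ((Fin (n + 1) → ℝ) × ℝ) => p.1 • p.2) '' (Set.Icc 0 B ×ˢ K)
      with hSdef
    have hScomp : IsCompact S :=
      ((isCompact_Icc).prod hKcomp).image (continuous_fst.smul continuous_snd)
    have hTS : T = (fun t => ((c, t) : (Fin (n + 1) → ℝ) × ℝ)) ⁻¹' S := by
      ext t
      constructor
      · rintro ⟨r, hr, u, hu, hru⟩
        have hΛu : ε ≤ Λ u := hKε u hu
        have h1 : L = r * Λ u := by
          have := congrArg Λ hru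
          rwa [hΛlin.map_smul, smul_eq_mul] at this
        have hrB : r ≤ B := by
          refine le_max_of_le_left ?_
          rw [le_div_iff₀ hε]
          calc r * ε ≤ r * Λ u := mul_le_mul_of_nonneg_left hΛu hr
          _ = L := h1.symm
        exact ⟨(r, u), ⟨⟨hr, hrB⟩, hu⟩, hru.symm⟩
      · rintro ⟨⟨r, u⟩, ⟨⟨hr0, hrB⟩, hu⟩, h⟩
        exact ⟨r, hr0, u, hu, h.symm⟩
    rw [hTS]
    rw [Metric.isCompact_iff_isClosed_bounded]
    constructor
    · exact hScomp.isClosed.preimage (Continuous.prodMk_right c)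
    · obtain ⟨RS, hRS⟩ := hScomp.isBounded.subset_closedBall 0
      apply (Metric.isBounded_Icc (-RS) RS).subset
      intro t ht
      have h2 := hRS ht
      rw [Metric.mem_closedBall, dist_zero_right] at h2
      have h3 : |t| ≤ ‖((c, t) : (Fin (n + 1) → ℝ) × ℝ)‖ := norm_snd_le ((c, t) : (Fin (n + 1) → ℝ) × ℝ)
      rw [Set.mem_Icc]
      constructor <;> [skip; skip] <;> cases abs_le.mp (le_trans h3 h2) <;> linarith
  obtain ⟨tstar, htT, htub⟩ := hTcomp.exists_isGreatest hTne
  -- maximality of tstar over discrete combinations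
  have Hmax : ∀ (s : Finset X) (a : X → ℝ), (∀ x ∈ s, 0 ≤ a x) →
      (∑ x ∈ s, a x • P x).1 = c → (∑ x ∈ s, a x • P x).2 ≤ tstar := by
    intro s a ha h1
    have hmem := hDC s a ha
    have heq : ((c, (∑ x ∈ s, a x • P x).2) : (Fin (n + 1) → ℝ) × ℝ) = ∑ x ∈ s, a x • P x := by
      rw [← h1]
    have : (∑ x ∈ s, a x • P x).2 ∈ T := by
      rw [hTdef]
      simp only [Set.mem_setOf_eq]
      rw [heq]
      exact hmem
    exact htub this
  -- reduction of the number of atoms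
  have hred : ∀ (m : ℕ) (s : Finset X) (a : X → ℝ), s.card ≤ m → (∀ x ∈ s, 0 ≤ a x) →
      ∑ x ∈ s, a x • P x = ((c, tstar) : (Fin (n + 1) → ℝ) × ℝ) →
      ∃ (s' : Finset X) (a' : X → ℝ), s'.card ≤ n + 1 ∧ (∀ x ∈ s', 0 ≤ a' x) ∧
        ∑ x ∈ s', a' x • P x = ((c, tstar) : (Fin (n + 1) → ℝ) × ℝ) := by
    intro m
    induction m with
    | zero =>
      intro s a hcard ha hsum
      exact ⟨s, a, by omega, ha, hsum⟩
    | succ m IH =>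
      intro s a hcard ha hsum
      by_cases hcard2 : s.card ≤ n + 1
      · exact ⟨s, a, hcard2, ha, hsum⟩
      by_cases h0 : ∃ x ∈ s, a x = 0
      · obtain ⟨x1, hx1s, hx1⟩ := h0
        refine IH (s.erase x1) a ?_ (fun x hx => ha x (Finset.mem_of_mem_erase hx)) ?_
        · have := Finset.card_erase_of_mem hx1s
          omega
        · rw [Finset.sum_erase _ (by rw [hx1, zero_smul])]
          exact hsum
      push_neg at h0
      have hapos : ∀ x ∈ s, 0 < a x := fun x hx => lt_of_le_of_ne (ha x hx) (Ne.symm (h0 x hx))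
      have hsne : s.Nonempty := Finset.card_pos.mp (by omega)
      -- a linear dependence among the first components
      have hnli : ¬ LinearIndependent ℝ (fun x : ↥s => (P (x : X)).1) := by
        intro hli
        have hle := hli.fintype_card_le_finrank
        rw [Fintype.card_coe, Module.finrank_fintype_fun_eq_card] at hle
        simp at hle
        omega
      obtain ⟨t, hts, ⟨i0, hi0⟩⟩ := Fintype.not_linearIndependent_iff.mp hnli
      set tt : X → ℝ := fun x => if h : x ∈ s then t ⟨x, h⟩ else 0 with htt
      have httmem : ∀ (x) (hx : x ∈ s), tt x = t ⟨x, hx⟩ := by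
        intro x hx
        simp only [htt, dif_pos hx]
      have htt1 : ∑ x ∈ s, tt x • (P x).1 = 0 := by
        rw [← hts, ← Finset.sum_coe_sort s (fun x => tt x • (P x).1)]
        exact Finset.sum_congr rfl fun i _ => by rw [httmem i.1 i.2]
      -- a helper: no nonneg perturbation direction can exist
      have hcon : ∀ u : X → ℝ, (∑ x ∈ s, u x • P x).1 = 0 →
          ¬ (0 < (∑ x ∈ s, u x • P x).2) := by
        intro u hu1 hu2
        set A := s.inf' hsne a with hAdef
        have hA : 0 < A := (Finset.lt_inf'_iff hsne).mpr fun x hx => hapos x hx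
        set Bu := s.sup' hsne (fun x => |u x|) with hBudef
        have hBu : 0 ≤ Bu :=
          le_trans (abs_nonneg (u hsne.choose)) (Finset.le_sup' (fun x => |u x|) hsne.choose_spec)
        set ς := A / (Bu + 1) with hςdef
        have hς : 0 < ς := div_pos hA (by linarith)
        have hςB : ς * (Bu + 1) = A := div_mul_cancel₀ _ (by linarith)
        have hb : ∀ x ∈ s, 0 ≤ a x + ς * u x := by
          intro x hx
          have h1 : |u x| ≤ Bu := Finset.le_sup' (fun x => |u x|) hx
          have h3 : A ≤ a x := Finset.inf'_le _ hx
          have h4 : -|u x| ≤ u x := neg_abs_le (u x)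
          nlinarith
        have hsplit : ∑ x ∈ s, (a x + ς * u x) • P x
            = (∑ x ∈ s, a x • P x) + ς • (∑ x ∈ s, u x • P x) := by
          rw [Finset.smul_sum, ← Finset.sum_add_distrib]
          exact Finset.sum_congr rfl fun x _ => by rw [add_smul, smul_smul]
        have hfst : (∑ x ∈ s, (a x + ς * u x) • P x).1 = c := by
          rw [hsplit]
          show (∑ x ∈ s, a x • P x).1 + (ς • ∑ x ∈ s, u x • P x).1 = c
          rw [hsum]
          show c + ς • (∑ x ∈ s, u x • P x).1 = c
          rw [hu1, smul_zero, add_zero]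
        have hle := Hmax s (fun x => a x + ς * u x) hb hfst
        rw [hsplit] at hle
        have hsnd : ((∑ x ∈ s, a x • P x) + ς • (∑ x ∈ s, u x • P x)).2
            = tstar + ς * (∑ x ∈ s, u x • P x).2 := by
          rw [hsum]
          rfl
        rw [hsnd] at hle
        nlinarith
      have hfst0 : (∑ x ∈ s, tt x • P x).1 = 0 := by
        rw [aux_fst_sum]
        exact htt1
      have hnegsum : ∀ u : X → ℝ, ∑ x ∈ s, (-u x) • P x = -∑ x ∈ s, u x • P x := by
        intro u
        rw [← Finset.sum_neg_distrib]
        exact Finset.sum_congr rfl fun x _ => by rw [neg_smul]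
      rcases lt_trichotomy ((∑ x ∈ s, tt x • P x).2) 0 with hτ | hτ | hτ
      · exfalso
        refine hcon (fun x => -tt x) ?_ ?_
        · rw [hnegsum tt]
          show -(∑ x ∈ s, tt x • P x).1 = 0
          rw [hfst0, neg_zero]
        · rw [hnegsum tt]
          show 0 < -(∑ x ∈ s, tt x • P x).2
          linarith
      · -- the dependence annihilates everything: remove one atom
        have hvec : ∑ x ∈ s, tt x • P x = 0 := by
          refine Prod.ext ?_ ?_
          · rw [hfst0]; rfl
          · rw [hτ]; rfl
        -- choose a direction with a strictly negative coefficient somewhere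
        obtain ⟨u, hu0, x1, hx1s, hx1neg⟩ :
            ∃ u : X → ℝ, (∑ x ∈ s, u x • P x = 0) ∧ ∃ x1 ∈ s, u x1 < 0 := by
          by_cases hneg : ∃ x ∈ s, tt x < 0
          · obtain ⟨x1, hx1, hx1'⟩ := hneg
            exact ⟨tt, hvec, x1, hx1, hx1'⟩
          · push_neg at hneg
            refine ⟨fun x => -tt x, by rw [hnegsum tt, hvec, neg_zero], i0.1, i0.2, ?_⟩
            have h1 : tt i0.1 ≠ 0 := by
              rw [httmem i0.1 i0.2]
              simpa using hi0
            have h2 : 0 ≤ tt i0.1 := hneg i0.1 i0.2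
            cases lt_or_eq_of_le h2 with
            | inl h => show -tt i0.1 < 0; linarith
            | inr h => exact absurd h.symm h1
        set S0 := s.filter (fun x => u x < 0) with hS0def
        have hS0ne : S0.Nonempty := ⟨x1, Finset.mem_filter.mpr ⟨hx1s, hx1neg⟩⟩
        set ς := S0.inf' hS0ne (fun x => a x / (-u x)) with hςdef
        obtain ⟨x2, hx2, hx2eq⟩ := Finset.exists_mem_eq_inf' hS0ne (fun x => a x / (-u x))
        have hx2s : x2 ∈ s := (Finset.mem_filter.mp hx2).1
        have hx2neg : u x2 < 0 := (Finset.mem_filter.mp hx2).2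
        have hςpos : 0 < ς := by
          rw [hςdef]
          rw [Finset.lt_inf'_iff]
          intro x hx
          exact div_pos (hapos x (Finset.mem_filter.mp hx).1)
            (neg_pos.mpr (Finset.mem_filter.mp hx).2)
        have hb : ∀ x ∈ s, 0 ≤ a x + ς * u x := by
          intro x hx
          by_cases hxneg : u x < 0
          · have h1 : ς ≤ a x / (-u x) := by
              rw [hςdef]
              exact Finset.inf'_le _ (Finset.mem_filter.mpr ⟨hx, hxneg⟩)
            have h2 : 0 < -u x := neg_pos.mpr hxneg
            rw [le_div_iff₀ h2] at h1
            nlinarith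
          · push_neg at hxneg
            nlinarith [ha x hx, hςpos.le]
        have hb2 : a x2 + ς * u x2 = 0 := by
          have hu2 : u x2 ≠ 0 := ne_of_lt hx2neg
          have hς2 : ς = a x2 / (-u x2) := hx2eq
          have h5 : a x2 / -u x2 * u x2 = -a x2 := by
            rw [div_mul_eq_mul_div, mul_div_assoc, div_neg, div_self hu2]
            ring
          rw [hς2]
          linarith
        have hsplit : ∑ x ∈ s, (a x + ς * u x) • P x
            = (∑ x ∈ s, a x • P x) + ς • (∑ x ∈ s, u x • P x) := by
          rw [Finset.smul_sum, ← Finset.sum_add_distrib]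
          exact Finset.sum_congr rfl fun x _ => by rw [add_smul, smul_smul]
        have hsum2 : ∑ x ∈ s, (a x + ς * u x) • P x = ((c, tstar) : (Fin (n + 1) → ℝ) × ℝ) := by
          rw [hsplit, hsum, hu0, smul_zero, add_zero]
        refine IH (s.erase x2) (fun x => a x + ς * u x) ?_
          (fun x hx => hb x (Finset.mem_of_mem_erase hx)) ?_
        · have := Finset.card_erase_of_mem hx2s
          omega
        · rw [Finset.sum_erase _ (by show (a x2 + ς * u x2) • P x2 = 0; rw [hb2, zero_smul])]
          exact hsum2
      · exact absurd hτ (by simpa using hcon tt hfst0)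
  -- initial finite representation of (c, tstar)
  obtain ⟨r, hr, u, huK, hrepr⟩ : ∃ r : ℝ, 0 ≤ r ∧ ∃ u ∈ K,
      ((c, tstar) : (Fin (n + 1) → ℝ) × ℝ) = r • u := htT
  obtain ⟨ι, hι, z, w, hrange, -, hwpos, hw1, hzsum⟩ :=
    eq_pos_convex_span_of_mem_convexHull huK
  have hz : ∀ i, ∃ x : X, P x = z i := by
    intro i
    obtain ⟨x, -, hx⟩ := hrange (Set.mem_range_self i)
    exact ⟨x, hx⟩
  choose ξ hξ using hz
  set s0 := Finset.univ.image ξ with hs0def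
  set a0 : X → ℝ := fun x => ∑ i ∈ Finset.univ.filter (fun i => ξ i = x), r * w i with ha0def
  have hs0sum : ∑ x ∈ s0, a0 x • P x = ((c, tstar) : (Fin (n + 1) → ℝ) × ℝ) := by
    have heq : ∀ i ∈ (Finset.univ : Finset ι),
        a0 (ξ i) • P (ξ i) = ∑ j ∈ Finset.univ.filter (fun j => ξ j = ξ i),
          (r * w j) • P (ξ j) := by
      intro i _
      rw [ha0def]
      rw [Finset.sum_smul]
      exact Finset.sum_congr rfl fun j hj => by
        rw [(Finset.mem_filter.mp hj).2]
    rw [hs0def, Finset.sum_image' (fun i => (r * w i) • P (ξ i)) heq]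
    calc ∑ i, (r * w i) • P (ξ i) = r • ∑ i, w i • z i := by
          rw [Finset.smul_sum]
          exact Finset.sum_congr rfl fun i _ => by rw [hξ i, mul_smul]
    _ = ((c, tstar) : (Fin (n + 1) → ℝ) × ℝ) := by rw [hzsum, ← hrepr]
  have ha0 : ∀ x ∈ s0, 0 ≤ a0 x := by
    intro x _
    exact Finset.sum_nonneg fun i _ => mul_nonneg hr (hwpos i).le
  obtain ⟨s', a', hcard', ha', hsum'⟩ := hred s0.card s0 a0 le_rfl ha0 hs0sum
  -- the maximizing measure
  set μmax : Measure X := ∑ x ∈ s', (ENNReal.ofReal (a' x)) • Measure.dirac x with hμmaxdef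
  haveI hμmaxfin : IsFiniteMeasure μmax := by
    constructor
    rw [hμmaxdef]
    rw [Measure.finset_sum_apply]
    refine ENNReal.sum_lt_top.mpr fun x _ => ?_
    rw [Measure.smul_apply, smul_eq_mul]
    exact ENNReal.mul_lt_top ENNReal.ofReal_lt_top (by simp [measure_univ])
  have hIμ : ∀ f : X → ℝ, Continuous f → ∫ x, f x ∂μmax = ∑ x ∈ s', a' x * f x := by
    intro f hf
    haveI : ∀ x : X, IsFiniteMeasure ((ENNReal.ofReal (a' x)) • Measure.dirac x) := by
      intro x
      constructor
      rw [Measure.smul_apply, smul_eq_mul]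
      exact ENNReal.mul_lt_top ENNReal.ofReal_lt_top (by simp [measure_univ])
    rw [hμmaxdef, integral_finset_sum_measure (fun x _ => aux_integrable hf _)]
    refine Finset.sum_congr rfl fun x hx => ?_
    rw [integral_smul_measure, integral_dirac, ENNReal.toReal_ofReal (ha' x hx), smul_eq_mul]
  have hfst' : ∀ i, ∑ x ∈ s', a' x * g i x = c i := by
    intro i
    calc ∑ x ∈ s', a' x * g i x = (∑ x ∈ s', a' x • P x).1 i := by
          rw [aux_fst_sum, Finset.sum_apply]
          rfl
    _ = c i := congrFun (congrArg Prod.fst hsum') i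
  have hsnd' : ∑ x ∈ s', a' x * gtop x = tstar := by
    calc ∑ x ∈ s', a' x * gtop x = (∑ x ∈ s', a' x • P x).2 := by
          rw [aux_snd_sum]
          rfl
    _ = tstar := congrArg Prod.snd hsum'
  have hgtopmax : ∫ x, gtop x ∂μmax = tstar := by
    rw [hIμ gtop hgtop, hsnd']
  refine ⟨μmax, ⟨fun i => aux_integrable (hg i) μmax, fun i => by
    rw [hIμ (g i) (hg i), hfst' i]⟩, ?_, ?_⟩
  · -- support bound
    have hsupp : measSupport μmax ⊆ ↑s' := by
      intro x hx
      by_contra hxs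
      have hU : IsOpen ((↑s' : Set X)ᶜ) := (s'.finite_toSet.isClosed).isOpen_compl
      have hpos := hx _ hU hxs
      have hzero : μmax ((↑s' : Set X)ᶜ) = 0 := by
        rw [hμmaxdef, Measure.finset_sum_apply]
        refine Finset.sum_eq_zero fun y hy => ?_
        rw [Measure.smul_apply, smul_eq_mul]
        rw [Measure.dirac_apply' _ hU.measurableSet]
        rw [Set.indicator_of_notMem (by simp [hy])]
        exact mul_zero _
      rw [hzero] at hpos
      exact lt_irrefl 0 hpos
    calc (measSupport μmax).encard ≤ (↑s' : Set X).encard := Set.encard_mono hsupp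
    _ = s'.card := Set.encard_coe_eq_coe_finsetCard s'
    _ ≤ n + 1 := by exact_mod_cast hcard'
  · intro μ ⟨hint, hmom⟩
    have hT : ∫ x, gtop x ∂μ ∈ T := hμC μ hint hmom
    rw [hgtopmax]
    exact htub hT
end

section
/- Let X be a compact Hausdorff topological space of cardinality at least 2, and suppose there exists a T-system (g_0,g_1) of continuous functions on X. Then X is homeomorphic to a subset of the unit circle S^1 ⊆ ℝ². -/
/-- If there exists a T-system `(g_0, g_1)` of continuous functions on a
compact Hausdorff space `X` of cardinality at least `2`, then `X` is
homeomorphic to a subset of the unit circle `S¹ ⊆ ℝ²`. -/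
theorem tsystem_homeomorph_subset_circle {X : Type*} [TopologicalSpace X]
    [CompactSpace X] [T2Space X]
    (hcard : (2 : Cardinal) ≤ Cardinal.mk X)
    (g : Fin 2 → X → ℝ) (hg : ∀ i, Continuous (g i))
    (hT : ∀ x : Fin 2 → X, Function.Injective x →
      (Matrix.of fun i j => g i (x j)).det ≠ 0) :
    ∃ Y : Set (EuclideanSpace ℝ (Fin 2)),
      Y ⊆ Metric.sphere (0 : EuclideanSpace ℝ (Fin 2)) 1 ∧ Nonempty (X ≃ₜ Y) := by
  classical
  set v : X → EuclideanSpace ℝ (Fin 2) :=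
    fun x => (WithLp.equiv 2 (Fin 2 → ℝ)).symm (fun i => g i x) with hv
  have hvapp : ∀ x i, v x i = g i x := fun x i => rfl
  have hvcont : Continuous v := by
    exact Continuous.comp (PiLp.continuous_toLp 2 _)
      (continuous_pi fun i => hg i)
  -- determinant condition in explicit form
  have hdet : ∀ x y : X, x ≠ y → g 0 x * g 1 y - g 0 y * g 1 x ≠ 0 := by
    intro x y hxy
    have hinj : Function.Injective ![x, y] := by
      intro i j hij
      fin_cases i <;> fin_cases j <;> simp_all
    have := hT ![x, y] hinj
    rw [Matrix.det_fin_two] at this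
    simpa using this
  -- v never vanishes
  have hvne : ∀ x, v x ≠ 0 := by
    intro x hx
    obtain ⟨y, hy⟩ := (Cardinal.two_le_iff' x).mp hcard
    have h0 : g 0 x = 0 := by
      have := congrFun (congrArg (WithLp.equiv 2 (Fin 2 → ℝ)) hx) 0
      simpa [hv] using this
    have h1 : g 1 x = 0 := by
      have := congrFun (congrArg (WithLp.equiv 2 (Fin 2 → ℝ)) hx) 1
      simpa [hv] using this
    exact hdet x y (Ne.symm hy) (by rw [h0, h1]; ring)
  have hnorm : ∀ x, ‖v x‖ ≠ 0 := fun x => norm_ne_zero_iff.mpr (hvne x)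
  set f : X → EuclideanSpace ℝ (Fin 2) := fun x => ‖v x‖⁻¹ • v x with hf
  have hfcont : Continuous f := (hvcont.norm.inv₀ hnorm).smul hvcont
  have hfsphere : ∀ x, f x ∈ Metric.sphere (0 : EuclideanSpace ℝ (Fin 2)) 1 := by
    intro x
    rw [mem_sphere_zero_iff_norm, hf]
    simp only [norm_smul, norm_inv, norm_norm]
    exact inv_mul_cancel₀ (hnorm x)
  have hfinj : Function.Injective f := by
    intro a b hab
    by_contra hne
    have h1 : v a = (‖v a‖ * ‖v b‖⁻¹) • v b := by
      have := congrArg (fun w => ‖v a‖ • w) hab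
      simpa [hf, smul_smul, mul_inv_cancel₀ (hnorm a), mul_assoc] using this
    have c0 : g 0 a = (‖v a‖ * ‖v b‖⁻¹) * g 0 b := by
      have := congrFun (congrArg (WithLp.equiv 2 (Fin 2 → ℝ)) h1) 0
      simpa [hv] using this
    have c1 : g 1 a = (‖v a‖ * ‖v b‖⁻¹) * g 1 b := by
      have := congrFun (congrArg (WithLp.equiv 2 (Fin 2 → ℝ)) h1) 1
      simpa [hv] using this
    exact hdet a b hne (by rw [c0, c1]; ring)
  have hemb : Topology.IsEmbedding f := (hfcont.isClosedEmbedding hfinj).toIsEmbedding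
  refine ⟨Set.range f, ?_, ⟨hemb.toHomeomorph⟩⟩
  rintro y ⟨x, rfl⟩
  exact hfsphere x
end

section
/- Let a < b be real numbers and let (g_0,…,g_n) be a T-system of continuous functions on [a,b]. Then the determinant det(g_i(x_j))_{i,j=0}^n is of constant sign on the simplex Σ := {(x_0,…,x_n) : a ≤ x_0 < x_1 < … < x_n ≤ b}: either det(g_i(x_j))_{i,j=0}^n > 0 for all (x_0,…,x_n) ∈ Σ, or det(g_i(x_j))_{i,j=0}^n < 0 for all (x_0,…,x_n) ∈ Σ. -/
/-- For a T-system `(g_0, …, g_n)` of continuous functions on `[a, b]`, the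
determinant `det (g_i(x_j))` has constant sign on the simplex
`a ≤ x_0 < x_1 < … < x_n ≤ b`. -/
theorem tsystem_det_constant_sign (a b : ℝ) (hab : a < b) (n : ℕ)
    (g : Fin (n + 1) → ℝ → ℝ) (hg : ∀ i, ContinuousOn (g i) (Set.Icc a b))
    (hT : ∀ x : Fin (n + 1) → ℝ, (∀ j, x j ∈ Set.Icc a b) → Function.Injective x →
      (Matrix.of fun i j => g i (x j)).det ≠ 0) :
    (∀ x : Fin (n + 1) → ℝ, StrictMono x → (∀ j, x j ∈ Set.Icc a b) →
      0 < (Matrix.of fun i j => g i (x j)).det) ∨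
    (∀ x : Fin (n + 1) → ℝ, StrictMono x → (∀ j, x j ∈ Set.Icc a b) →
      (Matrix.of fun i j => g i (x j)).det < 0) := by
  set S : Set (Fin (n + 1) → ℝ) := {x | StrictMono x ∧ ∀ j, x j ∈ Set.Icc a b} with hSdef
  set f : (Fin (n + 1) → ℝ) → ℝ := fun x => (Matrix.of fun i j => g i (x j)).det with hfdef
  -- S is convex
  have hconv : Convex ℝ S := by
    intro x hx y hy s t hs ht hst
    refine ⟨fun i j hij => ?_, fun j => ?_⟩
    · simp only [Pi.add_apply, Pi.smul_apply, smul_eq_mul]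
      rcases hs.lt_or_eq with h | h
      · exact add_lt_add_of_lt_of_le (mul_lt_mul_of_pos_left (hx.1 hij) h)
          (mul_le_mul_of_nonneg_left (hy.1 hij).le ht)
      · have ht' : 0 < t := by rw [← h] at hst; linarith
        exact add_lt_add_of_le_of_lt (mul_le_mul_of_nonneg_left (hx.1 hij).le hs)
          (mul_lt_mul_of_pos_left (hy.1 hij) ht')
    · have := (convex_Icc a b) (hx.2 j) (hy.2 j) hs ht hst
      simpa using this
  -- f is continuous on S
  have hfc : ContinuousOn f S := by
    have hM : ContinuousOn (fun x : Fin (n + 1) → ℝ => (Matrix.of fun i j => g i (x j))) S := by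
      apply continuousOn_pi.2
      intro i
      apply continuousOn_pi.2
      intro j
      exact (hg i).comp (continuous_apply j).continuousOn (fun x hx => hx.2 j)
    exact (continuous_id.matrix_det).comp_continuousOn hM
  -- f is nonzero on S
  have hne0 : ∀ x ∈ S, f x ≠ 0 := fun x hx => hT x hx.2 hx.1.injective
  -- S is preconnected
  have hprec : IsPreconnected S := hconv.isPreconnected
  -- a base point
  set d : ℝ := (b - a) / (n + 1) with hd
  have hd0 : 0 < d := div_pos (sub_pos.2 hab) (by positivity)
  set x0 : Fin (n + 1) → ℝ := fun j => a + (j : ℝ) * d with hx0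
  have hx0S : x0 ∈ S := by
    constructor
    · intro i j hij
      have : (i : ℝ) < (j : ℝ) := by exact_mod_cast hij
      simp only [hx0]
      nlinarith
    · intro j
      have hj : (j : ℝ) ≤ n := by exact_mod_cast Fin.is_le j
      have hjn : (0 : ℝ) ≤ (j : ℝ) := Nat.cast_nonneg _
      have hnd : ((n : ℝ) + 1) * d = b - a := by
        rw [hd]; field_simp
      constructor
      · simp only [hx0]; nlinarith
      · simp only [hx0]; nlinarith
  -- if f changes sign on S, then f vanishes somewhere on S
  have sign : ∀ x ∈ S, ∀ y ∈ S, f x < 0 → f y < 0 := by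
    intro x hx y hy hfx
    by_contra hcon
    have hfy : 0 < f y := (hne0 y hy).lt_or_gt.resolve_left (by linarith [not_lt.1 hcon])
    have h0 : (0 : ℝ) ∈ Set.Icc (f x) (f y) := ⟨hfx.le, hfy.le⟩
    obtain ⟨z, hz, hfz⟩ := hprec.intermediate_value hx hy hfc h0
    exact hne0 z hz hfz
  rcases (hne0 x0 hx0S).lt_or_gt with h | h
  · right
    intro x hmono hmem
    exact sign x0 hx0S x ⟨hmono, hmem⟩ h
  · left
    intro x hmono hmem
    have hxS : x ∈ S := ⟨hmono, hmem⟩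
    rcases (hne0 x hxS).lt_or_gt with h' | h'
    · exact absurd h (not_lt.2 (sign x hxS x0 hx0S h').le)
    · exact h'
end

section
/- Let a < b be real numbers and let (g_0,…,g_n) be a T-system of continuous functions on [a,b]. Then either (g_0,…,g_n) is a T_+-system on [a,b], or (g_0,…,g_{n-1},−g_n) is a T_+-system on [a,b]. -/
/-- `(g_0, …, g_k)` is a T₊-system on `[a, b]`: the determinant
`det (g_i(x_j))` is strictly positive whenever `a ≤ x_0 < … < x_k ≤ b`. -/
def IsTPlusSystem {k : ℕ} (a b : ℝ) (g : Fin (k + 1) → ℝ → ℝ) : Prop :=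
  ∀ x : Fin (k + 1) → ℝ, StrictMono x → (∀ j, x j ∈ Set.Icc a b) →
    0 < (Matrix.of fun i j => g i (x j)).det

/-- If `(g_0, …, g_n)` is a T-system of continuous functions on `[a, b]`, then
either `(g_0, …, g_n)` or `(g_0, …, g_{n-1}, -g_n)` is a T₊-system on
`[a, b]`. -/
theorem tsystem_or_neg_last_tplus (a b : ℝ) (hab : a < b) (n : ℕ)
    (g : Fin (n + 1) → ℝ → ℝ) (hg : ∀ i, ContinuousOn (g i) (Set.Icc a b))
    (hT : ∀ x : Fin (n + 1) → ℝ, (∀ j, x j ∈ Set.Icc a b) → Function.Injective x →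
      (Matrix.of fun i j => g i (x j)).det ≠ 0) :
    IsTPlusSystem a b g ∨
      IsTPlusSystem a b (Function.update g (Fin.last n) (fun x => -(g (Fin.last n) x))) := by
  set S : Set (Fin (n + 1) → ℝ) :=
    {x | StrictMono x ∧ ∀ j, x j ∈ Set.Icc a b} with hS
  set f : (Fin (n + 1) → ℝ) → ℝ :=
    fun x => (Matrix.of fun i j => g i (x j)).det with hf
  have hne : ∀ x ∈ S, f x ≠ 0 := fun x hx => hT x hx.2 hx.1.injective
  -- convexity of S
  have hconv : Convex ℝ S := by
    intro x hx y hy s t hs ht hst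
    refine ⟨fun i j hij => ?_, fun j => ?_⟩
    · have h1 := hx.1 hij
      have h2 := hy.1 hij
      simp only [Pi.add_apply, Pi.smul_apply, smul_eq_mul]
      rcases lt_or_eq_of_le hs with hs' | hs'
      · nlinarith [mul_le_mul_of_nonneg_left h2.le ht]
      · have : t = 1 := by linarith
        nlinarith
    · have h1 := hx.2 j
      have h2 := hy.2 j
      simp only [Pi.add_apply, Pi.smul_apply, smul_eq_mul]
      exact (convex_Icc a b) h1 h2 hs ht hst
  -- continuity of f on S
  have hfc : ContinuousOn f S := by
    have hM : ContinuousOn (fun x : Fin (n + 1) → ℝ =>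
        (Matrix.of fun i j => g i (x j) : Matrix (Fin (n + 1)) (Fin (n + 1)) ℝ)) S := by
      apply continuousOn_pi.2
      intro i
      apply continuousOn_pi.2
      intro j
      exact (hg i).comp (continuous_apply j).continuousOn fun x hx => hx.2 j
    exact (continuous_id.matrix_det).comp_continuousOn hM
  have hpre : IsPreconnected (f '' S) := (hconv.isPreconnected).image f hfc
  by_cases hpos : ∀ x ∈ S, 0 < f x
  · exact Or.inl fun x hx1 hx2 => hpos x ⟨hx1, hx2⟩
  · push_neg at hpos
    obtain ⟨x₀, hx₀, hfx₀⟩ := hpos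
    have hfx₀' : f x₀ < 0 := lt_of_le_of_ne hfx₀ (hne x₀ hx₀)
    right
    intro y hy1 hy2
    have hyS : y ∈ S := ⟨hy1, hy2⟩
    have hfy : f y < 0 := by
      rcases lt_or_gt_of_ne (hne y hyS) with h | h
      · exact h
      · exfalso
        have h0 : (0 : ℝ) ∈ f '' S := by
          apply hpre.Icc_subset ⟨x₀, hx₀, rfl⟩ ⟨y, hyS, rfl⟩
          exact ⟨hfx₀'.le, h.le⟩
        obtain ⟨z, hzS, hz⟩ := h0
        exact hne z hzS hz
    -- the matrix with negated last row
    have hmat : (Matrix.of fun i j =>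
        Function.update g (Fin.last n) (fun x => -(g (Fin.last n) x)) i (y j)) =
        Matrix.updateRow (Matrix.of fun i j => g i (y j)) (Fin.last n)
          ((-1 : ℝ) • fun j => g (Fin.last n) (y j)) := by
      ext i j
      by_cases hi : i = Fin.last n
      · subst hi
        simp [Function.update_self, Matrix.updateRow_apply]
      · simp [Function.update_of_ne hi, Matrix.updateRow_apply, hi]
    rw [hmat, Matrix.det_updateRow_smul]
    have : Matrix.updateRow (Matrix.of fun i j => g i (y j)) (Fin.last n)
        (fun j => g (Fin.last n) (y j)) = (Matrix.of fun i j => g i (y j)) := by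
      apply Matrix.updateRow_eq_self
    rw [this]
    have : (Matrix.of fun i j => g i (y j)).det = f y := rfl
    rw [this]
    nlinarith
end

section
/- Let a < b be real numbers and let (g_0,…,g_n) be an M-system of continuous functions on [a,b], that is, (g_0,…,g_k) is a T-system on [a,b] for each k = 0,…,n. Then there exists a sequence of signs (s_0,…,s_n) ∈ {−1,1}^{n+1} such that (s_0 g_0,…,s_n g_n) is an M_+-system on [a,b]. -/
/-- `(g_0, …, g_k)` is a T-system on `[a, b]`: the determinant `det (g_i(x_j))`
is nonzero for any `k + 1` distinct points `x_0, …, x_k` of `[a, b]`. -/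
def IsTSystemOn {k : ℕ} (a b : ℝ) (g : Fin (k + 1) → ℝ → ℝ) : Prop :=
  ∀ x : Fin (k + 1) → ℝ, (∀ j, x j ∈ Set.Icc a b) → Function.Injective x →
    (Matrix.of fun i j => g i (x j)).det ≠ 0

/-- If `(g_0, …, g_n)` is an M-system of continuous functions on `[a, b]`
(i.e., each initial segment `(g_0, …, g_k)` is a T-system on `[a, b]`), then
there is a choice of signs `s_i ∈ {-1, 1}` such that `(s_0 g_0, …, s_n g_n)`
is an M₊-system on `[a, b]`. -/
theorem msystem_signs_mplus (a b : ℝ) (hab : a < b) (n : ℕ)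
    (g : Fin (n + 1) → ℝ → ℝ) (hg : ∀ i, ContinuousOn (g i) (Set.Icc a b))
    (hM : ∀ k : ℕ, ∀ hk : k ≤ n,
      IsTSystemOn a b (fun i : Fin (k + 1) => g (Fin.castLE (by omega) i))) :
    ∃ s : Fin (n + 1) → ℝ, (∀ i, s i = 1 ∨ s i = -1) ∧
      ∀ k : ℕ, ∀ hk : k ≤ n,
        IsTPlusSystem a b (fun i : Fin (k + 1) => fun x =>
          s (Fin.castLE (by omega) i) * g (Fin.castLE (by omega) i) x) := by
  
  classical
  -- extend g to ℕ
  set G : ℕ → ℝ → ℝ := fun i => if h : i ≤ n then g ⟨i, by omega⟩ else 0 with hG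
  have hGeq : ∀ k (hk : k ≤ n) (i : Fin (k+1)), G i = g (Fin.castLE (by omega) i) := by
    intro k hk i
    have : (i : ℕ) ≤ n := by omega
    simp [hG, this, Fin.castLE]
  have hGcont : ∀ k (hk : k ≤ n) (i : Fin (k+1)), ContinuousOn (G i) (Set.Icc a b) := by
    intro k hk i; rw [hGeq k hk i]; exact hg _
  -- determinant function
  set D : ∀ k : ℕ, (Fin (k+1) → ℝ) → ℝ :=
    fun k x => (Matrix.of fun i j : Fin (k+1) => G i (x j)).det with hD
  -- domain
  set S : ∀ k : ℕ, Set (Fin (k+1) → ℝ) :=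
    fun k => {x | StrictMono x ∧ ∀ j, x j ∈ Set.Icc a b} with hS
  -- base point
  set xb : ∀ k : ℕ, Fin (k+1) → ℝ :=
    fun k j => a + ((j : ℝ) + 1) * ((b - a) / ((k : ℝ) + 2)) with hxb
  have hc : ∀ k : ℕ, 0 < (b - a) / ((k : ℝ) + 2) := by
    intro k
    apply div_pos (by linarith) (by positivity)
  have hxbS : ∀ k, xb k ∈ S k := by
    intro k
    constructor
    · intro i j hij
      have : (i : ℝ) < (j : ℝ) := by exact_mod_cast hij
      have := hc k
      simp only [hxb]
      nlinarith
    · intro j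
      have h1 : ((j : ℝ) + 1) ≤ (k : ℝ) + 2 := by
        have := j.isLt
        have : (j : ℝ) ≤ (k : ℝ) := by exact_mod_cast Nat.lt_succ_iff.mp j.isLt
        linarith
      have := hc k
      constructor
      · simp only [hxb]; nlinarith
      · simp only [hxb]
        have : ((j : ℝ) + 1) * ((b - a) / ((k : ℝ) + 2)) ≤ ((k : ℝ) + 2) * ((b - a) / ((k : ℝ) + 2)) := by
          nlinarith
        have h2 : ((k : ℝ) + 2) * ((b - a) / ((k : ℝ) + 2)) = b - a := by
          field_simp
        linarith
  -- S is convex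
  have hSconv : ∀ k, Convex ℝ (S k) := by
    intro k x hx y hy t u ht hu htu
    constructor
    · intro i j hij
      have h1 := hx.1 hij
      have h2 := hy.1 hij
      simp only [Pi.add_apply, Pi.smul_apply, smul_eq_mul]
      rcases ht.lt_or_eq with htpos | ht0
      · nlinarith [mul_lt_mul_of_pos_left h1 htpos, mul_le_mul_of_nonneg_left h2.le hu]
      · have hupos : 0 < u := by linarith
        nlinarith [mul_lt_mul_of_pos_left h2 hupos, mul_le_mul_of_nonneg_left h1.le ht]
    · intro j
      exact (convex_Icc a b) (hx.2 j) (hy.2 j) ht hu htu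
  -- D is continuous on S
  have hDcont : ∀ k (hk : k ≤ n), ContinuousOn (D k) (S k) := by
    intro k hk
    have hmat : ContinuousOn (fun x : Fin (k+1) → ℝ => (Matrix.of fun i j : Fin (k+1) => G i (x j) : Matrix (Fin (k+1)) (Fin (k+1)) ℝ)) (S k) := by
      apply continuousOn_pi.2; intro i
      apply continuousOn_pi.2; intro j
      exact (hGcont k hk i).comp (continuous_apply j).continuousOn (fun x hx => hx.2 j)
    exact (continuous_id.matrix_det).comp_continuousOn hmat
  -- D is nonzero on S
  have hDne : ∀ k (hk : k ≤ n), ∀ x ∈ S k, D k x ≠ 0 := by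
    intro k hk x hx
    have := hM k hk x hx.2 hx.1.injective
    simpa [hD, hGeq k hk] using this
  -- same sign on S
  have hsign : ∀ k (hk : k ≤ n), ∀ x ∈ S k, 0 < D k x * D k (xb k) := by
    intro k hk x hx
    by_contra h
    push_neg at h
    have hxne := hDne k hk x hx
    have hbne := hDne k hk (xb k) (hxbS k)
    have hpre : IsPreconnected (D k '' S k) :=
      ((hSconv k).isPreconnected).image (D k) (hDcont k hk)
    have h0 : (0 : ℝ) ∈ D k '' S k := by
      rcases le_total (D k x) (D k (xb k)) with hle | hle
      · have : (0:ℝ) ∈ Set.Icc (D k x) (D k (xb k)) := by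
          constructor <;> nlinarith [hxne.lt_or_gt, hbne.lt_or_gt]
        exact hpre.Icc_subset ⟨x, hx, rfl⟩ ⟨xb k, hxbS k, rfl⟩ this
      · have : (0:ℝ) ∈ Set.Icc (D k (xb k)) (D k x) := by
          constructor <;> nlinarith
        exact hpre.Icc_subset ⟨xb k, hxbS k, rfl⟩ ⟨x, hx, rfl⟩ this
    obtain ⟨z, hz, hz0⟩ := h0
    exact hDne k hk z hz hz0
  -- signs
  set ε : ℕ → ℝ := fun k => if 0 < D k (xb k) then 1 else -1 with hε
  have hεsq : ∀ k, ε k * ε k = 1 := by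
    intro k; simp only [hε]; split <;> norm_num
  have hεpm : ∀ k, ε k = 1 ∨ ε k = -1 := by
    intro k; simp only [hε]; split
    · exact Or.inl rfl
    · exact Or.inr rfl
  have hεD : ∀ k (hk : k ≤ n), ∀ x ∈ S k, 0 < ε k * D k x := by
    intro k hk x hx
    have h1 := hsign k hk x hx
    have h2 := hDne k hk (xb k) (hxbS k)
    by_cases h : 0 < D k (xb k)
    · simp only [hε, if_pos h]
      nlinarith
    · simp only [hε, if_neg h]
      have : D k (xb k) < 0 := lt_of_le_of_ne (not_lt.mp h) h2
      nlinarith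
  set sN : ℕ → ℝ := fun i => if i = 0 then ε 0 else ε i * ε (i-1) with hsN
  have hsN0 : sN 0 = ε 0 := by simp [hsN]
  have hsNs : ∀ m : ℕ, sN (m+1) = ε (m+1) * ε m := by intro m; simp [hsN]
  have hprod : ∀ k : ℕ, ∏ i ∈ Finset.range (k+1), sN i = ε k := by
    intro k
    induction k with
    | zero => simpa using hsN0
    | succ m ih =>
      rw [Finset.prod_range_succ, ih, hsNs m]
      rcases hεpm m with h2 | h2 <;> rw [h2] <;> ring
  refine ⟨fun i => sN i, ?_, ?_⟩
  · intro i
    show sN (i : ℕ) = 1 ∨ sN (i : ℕ) = -1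
    cases h : (i : ℕ) with
    | zero => rw [hsN0]; exact hεpm 0
    | succ m =>
      rw [hsNs m]
      rcases hεpm (m+1) with h1 | h1 <;> rcases hεpm m with h2 | h2 <;>
        rw [h1, h2] <;> norm_num
  · intro k hk x hmono hmem
    have hxS : x ∈ S k := ⟨hmono, hmem⟩
    have key := hεD k hk x hxS
    have hdet : (Matrix.of fun i j : Fin (k+1) => sN ((Fin.castLE (by omega) i : Fin (n+1)) : ℕ) * g (Fin.castLE (by omega) i) (x j)).det
        = (∏ i : Fin (k+1), sN (i : ℕ)) * D k x := by
      have := Matrix.det_mul_column (fun i : Fin (k+1) => sN (i : ℕ))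
        (Matrix.of fun i j : Fin (k+1) => G i (x j))
      simp only [hD]
      rw [← this]
      congr 1
      ext i j
      simp [hGeq k hk, Fin.castLE]
    have hprodf : (∏ i : Fin (k+1), sN (i : ℕ)) = ε k := by
      rw [Fin.prod_univ_eq_prod_range (fun i => sN i) (k+1)]
      exact hprod k
    calc (0:ℝ) < ε k * D k x := key
    _ = _ := by rw [hdet, hprodf]
end

section
/- Let a < b be real numbers and let g_0,…,g_{n+1} be continuous functions on [a,b] such that both (g_0,…,g_n) and (g_0,…,g_{n+1}) are T_+-systems on [a,b]. Let c = (c_0,…,c_n) ∈ ℝ^{n+1} be such that M_c ≠ ∅. Then there exists a unique measure μ_max ∈ M_c such that ∫ g_{n+1} dμ_max ≥ ∫ g_{n+1} dμ for all μ ∈ M_c, and there exists a unique measure μ_min ∈ M_c such that ∫ g_{n+1} dμ_min ≤ ∫ g_{n+1} dμ for all μ ∈ M_c. -/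
open MeasureTheory
open Set

/-- `μ` belongs to the moment set `M_c`: it is a finite nonnegative Borel
measure on `[a, b]` (i.e. vanishing outside `[a, b]`) with `∫ g_i dμ = c_i`
for all `i`. -/
def MemMc (a b : ℝ) {n : ℕ} (g : Fin (n + 1) → ℝ → ℝ) (c : Fin (n + 1) → ℝ)
    (μ : Measure ℝ) : Prop :=
  IsFiniteMeasure μ ∧ μ (Set.Icc a b)ᶜ = 0 ∧ ∀ i, ∫ x, g i x ∂μ = c i


private lemma aux_isCompact_convexHull_s11 {d : ℕ} {s : Set (Fin d → ℝ)} (hs : IsCompact s) :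
    IsCompact (convexHull ℝ s) := by
  classical
  rcases s.eq_empty_or_nonempty with rfl | hne
  · simpa using isCompact_empty
  · set T : Set ((Fin (d+1) → ℝ) × (Fin (d+1) → (Fin d → ℝ))) :=
      (stdSimplex ℝ (Fin (d+1))) ×ˢ (Set.univ.pi fun _ => s) with hTdef
    have hT : IsCompact T := (isCompact_stdSimplex _ _).prod (isCompact_univ_pi fun _ => hs)
    have hcont : Continuous fun p : (Fin (d+1) → ℝ) × (Fin (d+1) → (Fin d → ℝ)) =>
        ∑ i, p.1 i • p.2 i :=
      continuous_finset_sum _ fun i _ =>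
        ((continuous_apply i).comp continuous_fst).smul ((continuous_apply i).comp continuous_snd)
    have himg : (fun p : (Fin (d+1) → ℝ) × (Fin (d+1) → (Fin d → ℝ)) =>
        ∑ i, p.1 i • p.2 i) '' T = convexHull ℝ s := by
      apply Subset.antisymm
      · rintro y ⟨⟨w, z⟩, ⟨hw, hz⟩, rfl⟩
        exact mem_convexHull_of_exists_fintype w z hw.1 hw.2 (fun i => hz i (mem_univ i)) rfl
      · intro y hy
        rw [convexHull_eq_union] at hy
        simp only [Set.mem_iUnion] at hy
        obtain ⟨t, hts, hai, hyt⟩ := hy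
        have htne : t.Nonempty := by
          rcases t.eq_empty_or_nonempty with rfl | h
          · simp at hyt
          · exact h
        obtain ⟨y0, hy0⟩ := htne
        have hcard : t.card ≤ d + 1 := by
          have h1 := hai.card_le_finrank_succ
          rw [Fintype.card_coe] at h1
          refine h1.trans ?_
          have h2 : Module.finrank ℝ ↥(vectorSpan ℝ (Set.range
              (Subtype.val : ↥t → (Fin d → ℝ)))) ≤ Module.finrank ℝ (Fin d → ℝ) :=
            Submodule.finrank_le _
          rw [Module.finrank_fin_fun] at h2
          omega
        rw [Finset.mem_convexHull'] at hyt
        obtain ⟨w, hw0, hw1, hwy⟩ := hyt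
        obtain ⟨emb⟩ : Nonempty (↥t ↪ Fin (d+1)) := by
          apply Function.Embedding.nonempty_of_card_le
          simpa [Fintype.card_coe] using hcard
        set wt : Fin (d+1) → ℝ :=
          fun i => if h : ∃ y : ↥t, emb y = i then w ↑(h.choose) else 0 with hwt
        set zz : Fin (d+1) → (Fin d → ℝ) :=
          fun i => if h : ∃ y : ↥t, emb y = i then (↑(h.choose) : Fin d → ℝ) else ↑y0 with hzz
        have hchoose : ∀ y : ↥t, (⟨y, rfl⟩ : ∃ y' : ↥t, emb y' = emb y).choose = y := by
          intro y
          exact emb.injective (⟨y, rfl⟩ : ∃ y' : ↥t, emb y' = emb y).choose_spec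
        have hwte : ∀ y : ↥t, wt (emb y) = w ↑y := by
          intro y
          simp only [hwt]
          rw [dif_pos ⟨y, rfl⟩, hchoose y]
        have hzze : ∀ y : ↥t, zz (emb y) = ↑y := by
          intro y
          simp only [hzz]
          rw [dif_pos ⟨y, rfl⟩, hchoose y]
        have hsum : ∀ {M : Type} [AddCommMonoid M] (F : ℝ → (Fin d → ℝ) → M), (∀ v, F 0 v = 0) →
            ∑ i, F (wt i) (zz i) = ∑ y ∈ t, F (w y) y := by
          intro M _ F hF0
          rw [← Finset.sum_subset (Finset.subset_univ (Finset.univ.map emb))]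
          · rw [Finset.sum_map]
            rw [← Finset.sum_coe_sort t (fun y => F (w y) y)]
            refine Finset.sum_congr rfl fun y _ => by rw [hwte y, hzze y]
          · intro i _ hi
            have : ¬ ∃ y : ↥t, emb y = i := by
              intro ⟨y, hy⟩
              exact hi (Finset.mem_map.2 ⟨y, Finset.mem_univ y, hy⟩)
            simp only [hwt, dif_neg this]
            exact hF0 _
        have hmemT : (wt, zz) ∈ T := by
          refine ⟨⟨fun i => ?_, ?_⟩, fun i _ => ?_⟩
          · simp only [hwt]
            split_ifs with h
            · exact hw0 _ (h.choose).2
            · exact le_rfl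
          · have := hsum (fun r _ => r) (fun _ => rfl)
            simpa [this] using hw1
          · simp only [hzz]
            split_ifs with h
            · exact hts (h.choose).2
            · exact hts hy0
        refine ⟨(wt, zz), hmemT, ?_⟩
        show ∑ i, wt i • zz i = y
        rw [hsum (fun r v => r • v) (fun v => zero_smul ℝ v)]
        exact hwy
    rw [← himg]
    exact hT.image hcont

private lemma aux_ae_mem {a b : ℝ} {μ : Measure ℝ} (hμ : μ (Set.Icc a b)ᶜ = 0) :
    ∀ᵐ x ∂μ, x ∈ Set.Icc a b := by
  rw [ae_iff]
  exact hμ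

private lemma aux_integrable_s11 {a b : ℝ} (hab : a ≤ b) {μ : Measure ℝ} [IsFiniteMeasure μ]
    (hμ : μ (Set.Icc a b)ᶜ = 0) {F : Type*} [NormedAddCommGroup F] [NormedSpace ℝ F]
    {f : ℝ → F} (hf : ContinuousOn f (Set.Icc a b)) : Integrable f μ := by
  set f' : ℝ → F := fun x => f ↑(projIcc a b hab x) with hf'
  have hcont : Continuous f' :=
    hf.comp_continuous (continuous_subtype_val.comp continuous_projIcc)
      (fun x => (projIcc a b hab x).2)
  have heq : f =ᵐ[μ] f' := by
    filter_upwards [aux_ae_mem hμ] with x hx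
    simp [hf', projIcc_of_mem hab hx]
  obtain ⟨C, hC⟩ := isCompact_Icc.exists_bound_of_continuousOn hf
  have hint : Integrable f' μ := by
    refine Integrable.mono' (integrable_const C) hcont.aestronglyMeasurable ?_
    exact Filter.Eventually.of_forall fun x => hC _ (projIcc a b hab x).2
  exact hint.congr heq.symm

private lemma aux_moment_repr {a b : ℝ} (hab : a ≤ b) {m : ℕ} {G : Fin m → ℝ → ℝ}
    (hG : ∀ i, ContinuousOn (G i) (Set.Icc a b)) (μ : Measure ℝ) [IsFiniteMeasure μ]
    (hμ : μ (Set.Icc a b)ᶜ = 0) :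
    ∃ z ∈ convexHull ℝ ((fun x => (fun i => G i x)) '' (Set.Icc a b)),
      (fun i => ∫ x, G i x ∂μ) = (μ Set.univ).toReal • z := by
  set V : ℝ → (Fin m → ℝ) := fun x => (fun i => G i x) with hV
  have hVcont : ContinuousOn V (Set.Icc a b) := continuousOn_pi.2 hG
  have hVint : Integrable V μ := aux_integrable_s11 hab hμ hVcont
  have hcomp : (fun i => ∫ x, G i x ∂μ) = ∫ x, V x ∂μ := by
    funext i
    have h := ContinuousLinearMap.integral_comp_comm
      (ContinuousLinearMap.proj (R := ℝ) (φ := fun _ : Fin m => ℝ) i) hVint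
    simpa [hV] using h
  have hKconv : Convex ℝ (convexHull ℝ (V '' Set.Icc a b)) := convex_convexHull _ _
  have hKcl : IsClosed (convexHull ℝ (V '' Set.Icc a b)) :=
    (aux_isCompact_convexHull_s11 (isCompact_Icc.image_of_continuousOn hVcont)).isClosed
  rcases eq_or_ne μ 0 with rfl | hμ0
  · refine ⟨V a, subset_convexHull ℝ _ ⟨a, ⟨le_refl a, hab⟩, rfl⟩, ?_⟩
    rw [hcomp]
    simp
  · haveI := NeZero.mk hμ0
    have hfs : ∀ᵐ x ∂μ, V x ∈ convexHull ℝ (V '' Set.Icc a b) := by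
      filter_upwards [aux_ae_mem hμ] with x hx
      exact subset_convexHull ℝ _ (mem_image_of_mem _ hx)
    have havg := hKconv.average_mem hKcl hfs hVint
    refine ⟨_, havg, ?_⟩
    rw [hcomp, average_eq, smul_smul, measureReal_def, mul_inv_cancel₀, one_smul]
    exact ENNReal.toReal_ne_zero.2 ⟨MeasureTheory.Measure.measure_univ_ne_zero.2 hμ0, measure_ne_top μ _⟩

private lemma aux_indep {a b : ℝ} (hab : a < b) {m : ℕ} {G : Fin (m+1) → ℝ → ℝ}
    (hdet : ∀ x : Fin (m+1) → ℝ, StrictMono x → (∀ j, x j ∈ Set.Icc a b) →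
      (Matrix.of fun i j => G i (x j)).det ≠ 0)
    (s : Finset ℝ) (hs : ↑s ⊆ Set.Icc a b) (hcard : s.card ≤ m+1) (w : ℝ → ℝ)
    (hw : ∀ i, ∑ z ∈ s, w z * G i z = 0) : ∀ z ∈ s, w z = 0 := by
  classical
  haveI : Infinite ↥(Set.Icc a b) := Set.Icc.infinite hab
  set s' : Finset ↥(Set.Icc a b) :=
    s.attach.map ⟨fun (z : {x // x ∈ s}) => (⟨(z : ℝ), hs z.2⟩ : ↥(Set.Icc a b)),
      fun u v huv => Subtype.ext (by simpa using congrArg Subtype.val huv)⟩ with hs'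
  have hs'card : s'.card = s.card := by simp [hs']
  obtain ⟨u, hsu, hucard⟩ := Infinite.exists_superset_card_eq s' (m+1) (by rw [hs'card]; exact hcard)
  set e := u.orderIsoOfFin hucard with he
  set x : Fin (m+1) → ℝ := fun j => ↑↑(e j) with hx
  have hxmono : StrictMono x := by
    intro j k hjk
    have h1 : e j < e k := e.strictMono hjk
    exact Subtype.coe_lt_coe.2 (Subtype.coe_lt_coe.2 h1)
  have hxmem : ∀ j, x j ∈ Set.Icc a b := fun j => (↑(e j) : ↥(Set.Icc a b)).2
  have hinj : Function.Injective x := hxmono.injective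
  have hsub : s ⊆ Finset.univ.image x := by
    intro z hz
    have hz' : (⟨z, hs hz⟩ : ↥(Set.Icc a b)) ∈ u :=
      hsu (Finset.mem_map.2 ⟨⟨z, hz⟩, Finset.mem_attach _ _, rfl⟩)
    obtain ⟨j, hj⟩ := e.surjective ⟨⟨z, hs hz⟩, hz'⟩
    refine Finset.mem_image.2 ⟨j, Finset.mem_univ j, ?_⟩
    rw [hx]
    simp [hj]
  set W : Fin (m+1) → ℝ := fun j => if x j ∈ s then w (x j) else 0 with hW
  have hMW : (Matrix.of fun i j => G i (x j)).mulVec W = 0 := by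
    funext i
    have hsum : ∀ j : Fin (m+1), (Matrix.of fun i j => G i (x j)) i j * W j
        = (fun z => if z ∈ s then w z * G i z else 0) (x j) := by
      intro j
      by_cases h : x j ∈ s <;> simp [hW, h, Matrix.of_apply, mul_comm]
    show (Matrix.of fun i j => G i (x j)).mulVec W i = (0 : Fin (m+1) → ℝ) i
    simp only [Matrix.mulVec, dotProduct, Pi.zero_apply]
    calc ∑ j, (Matrix.of fun i j => G i (x j)) i j * W j
        = ∑ j, (fun z => if z ∈ s then w z * G i z else 0) (x j) :=
          Finset.sum_congr rfl fun j _ => hsum j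
      _ = ∑ z ∈ Finset.univ.image x, (if z ∈ s then w z * G i z else 0) :=
          (Finset.sum_image (f := fun z => if z ∈ s then w z * G i z else 0)
            (g := x) (s := Finset.univ) (fun p _ q _ hpq => hinj hpq)).symm
      _ = ∑ z ∈ s, (if z ∈ s then w z * G i z else 0) :=
          (Finset.sum_subset hsub (fun z _ hz => if_neg hz)).symm
      _ = ∑ z ∈ s, w z * G i z := Finset.sum_congr rfl fun z hz => if_pos hz
      _ = 0 := hw i
  have hW0 : W = 0 := Matrix.eq_zero_of_mulVec_eq_zero (hdet x hxmono hxmem) hMW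
  intro z hz
  obtain ⟨j, _, hj⟩ := Finset.mem_image.1 (hsub hz)
  have := congrFun hW0 j
  rw [hW] at this
  simp only [hj, if_pos hz] at this
  exact this

private lemma aux_alt {a b : ℝ} {n : ℕ} {g : Fin (n+1) → ℝ → ℝ}
    (hT : IsTPlusSystem a b g) (x : Fin (n+2) → ℝ) (hx : StrictMono x)
    (hmem : ∀ j, x j ∈ Set.Icc a b) (w : Fin (n+2) → ℝ)
    (heq : ∀ i : Fin (n+1), ∑ j, w j * g i (x j) = 0) (hw : ∀ j, 0 ≤ w j) :
    ∀ j, w j = 0 := by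
  classical
  set D : Fin (n+2) → ℝ := fun j =>
    (Matrix.of fun (k : Fin (n+1)) (l : Fin (n+1)) => g k (x (j.succAbove l))).det with hD
  have hDpos : ∀ j, 0 < D j := fun j =>
    hT _ (hx.comp (Fin.strictMono_succAbove j)) (fun l => hmem _)
  have hid : ∀ i : Fin (n+1), ∑ j : Fin (n+2), (-1 : ℝ)^(j:ℕ) * g i (x j) * D j = 0 := by
    intro i
    set B : Matrix (Fin (n+2)) (Fin (n+2)) ℝ :=
      Matrix.of (fun r c => Fin.cases (g i (x c)) (fun k => g k (x c)) r) with hB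
    have hrow : B 0 = B i.succ := by
      funext c
      simp [hB]
    have hdet0 : B.det = 0 := Matrix.det_zero_of_row_eq (Fin.succ_ne_zero i).symm.symm hrow
    rw [Matrix.det_succ_row_zero] at hdet0
    have hsub : ∀ j : Fin (n+2), (B.submatrix Fin.succ j.succAbove).det = D j := by
      intro j
      have hBM : B.submatrix Fin.succ j.succAbove
          = Matrix.of fun (k : Fin (n+1)) (l : Fin (n+1)) => g k (x (j.succAbove l)) := by
        ext k l
        simp [hB, Matrix.submatrix_apply]
      rw [hBM, hD]
    rw [← hdet0]
    refine (Finset.sum_congr rfl fun j _ => ?_).symm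
    rw [hsub j]
    have hB0 : B 0 j = g i (x j) := by simp [hB]
    rw [hB0]
  set cc := w 0 / D 0 with hcc
  set u : Fin (n+2) → ℝ := fun j => w j - cc * ((-1:ℝ)^(j:ℕ) * D j) with hu
  have hu0 : u 0 = 0 := by
    have hDne : D 0 ≠ 0 := (hDpos 0).ne'
    simp only [hu, hcc, Fin.val_zero, pow_zero, one_mul]
    field_simp
    ring
  have hueq : ∀ i : Fin (n+1), ∑ j, u j * g i (x j) = 0 := by
    intro i
    simp only [hu, sub_mul, Finset.sum_sub_distrib]
    rw [heq i]
    have h2 : ∑ j : Fin (n+2), (cc * ((-1:ℝ)^(j:ℕ) * D j)) * g i (x j)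
        = cc * ∑ j : Fin (n+2), (-1:ℝ)^(j:ℕ) * g i (x j) * D j := by
      rw [Finset.mul_sum]
      exact Finset.sum_congr rfl fun j _ => by ring
    rw [h2, hid i]
    simp
  have hU0 : ∀ k : Fin (n+1), u k.succ = 0 := by
    have hdet : (Matrix.of fun (i : Fin (n+1)) (k : Fin (n+1)) => g i (x (Fin.succ k))).det ≠ 0 :=
      ne_of_gt (hT _ (hx.comp (fun _ _ h => Fin.succ_lt_succ_iff.2 h)) (fun k => hmem _))
    have hmv : (Matrix.of fun (i : Fin (n+1)) (k : Fin (n+1)) => g i (x (Fin.succ k))).mulVec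
        (fun k => u k.succ) = 0 := by
      funext i
      show ∑ k, (Matrix.of fun (i : Fin (n+1)) (k : Fin (n+1)) => g i (x (Fin.succ k))) i k
          * u k.succ = (0 : Fin (n+1) → ℝ) i
      have h3 := hueq i
      rw [Fin.sum_univ_succ, hu0, zero_mul, zero_add] at h3
      simp only [Matrix.of_apply, Pi.zero_apply]
      rw [← h3]
      exact Finset.sum_congr rfl fun k _ => by ring
    have := Matrix.eq_zero_of_mulVec_eq_zero hdet hmv
    intro k
    exact congrFun this k
  have huz : ∀ j, u j = 0 := by
    intro j
    induction j using Fin.cases with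
    | zero => exact hu0
    | succ k => exact hU0 k
  have hwj : ∀ j, w j = cc * ((-1:ℝ)^(j:ℕ) * D j) := by
    intro j
    have := huz j
    simp only [hu] at this
    linarith
  have hcc0 : cc = 0 := by
    have h1 : w 1 = cc * ((-1:ℝ)^((1 : Fin (n+2)):ℕ) * D 1) := hwj 1
    have hv1 : ((1 : Fin (n+2)) : ℕ) = 1 := rfl
    rw [hv1, pow_one] at h1
    have hge : 0 ≤ w 1 := hw 1
    have hccge : 0 ≤ cc := div_nonneg (hw 0) (hDpos 0).le
    nlinarith [hDpos 1]
  intro j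
  rw [hwj j, hcc0, zero_mul]

private lemma aux_zero_not_mem {a b : ℝ} (hab : a < b) {n : ℕ} {g : Fin (n+1) → ℝ → ℝ}
    (hT : IsTPlusSystem a b g) :
    (0 : Fin (n+1) → ℝ) ∉ convexHull ℝ ((fun x => (fun i => g i x)) '' (Set.Icc a b)) := by
  classical
  intro h0
  rw [convexHull_eq_union] at h0
  simp only [Set.mem_iUnion] at h0
  obtain ⟨t, hts, hai, hyt⟩ := h0
  have hcard : t.card ≤ n + 2 := by
    have h1 := hai.card_le_finrank_succ
    rw [Fintype.card_coe] at h1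
    refine h1.trans ?_
    have h2 : Module.finrank ℝ ↥(vectorSpan ℝ (Set.range
        (Subtype.val : ↥t → (Fin (n+1) → ℝ)))) ≤ Module.finrank ℝ (Fin (n+1) → ℝ) :=
      Submodule.finrank_le _
    rw [Module.finrank_fin_fun] at h2
    omega
  rw [Finset.mem_convexHull'] at hyt
  obtain ⟨w, hw0, hw1, hws⟩ := hyt
  have hpre : ∀ y : ↥t, ∃ p, p ∈ Set.Icc a b ∧ (fun i => g i p) = (y : Fin (n+1) → ℝ) :=
    fun y => hts y.2
  choose pt hptmem hpteq using hpre
  have hptinj : Function.Injective pt := fun y z h =>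
    Subtype.ext (by rw [← hpteq y, ← hpteq z, h])
  set s : Finset ℝ := Finset.univ.image pt with hsdef
  have hscard : s.card = t.card := by
    rw [hsdef, Finset.card_image_of_injective _ hptinj, Finset.card_univ, Fintype.card_coe]
  have hssub : ↑s ⊆ Set.Icc a b := by
    intro z hz
    obtain ⟨y, _, rfl⟩ := Finset.mem_image.1 hz
    exact hptmem y
  set ω : ℝ → ℝ := fun z => w (fun i => g i z) with hω
  have hωpt : ∀ y : ↥t, ω (pt y) = w ↑y := fun y => by rw [hω]; simp only; rw [hpteq y]
  have hωsum : ∀ i : Fin (n+1), ∑ z ∈ s, ω z * g i z = 0 := by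
    intro i
    rw [hsdef, Finset.sum_image (fun p _ q _ h => hptinj h)]
    have hterm : ∀ y : ↥t, ω (pt y) * g i (pt y) = w ↑y * (↑y : Fin (n+1) → ℝ) i := by
      intro y
      rw [hωpt y]
      congr 1
      exact congrFun (hpteq y) i
    rw [Finset.sum_congr rfl fun y _ => hterm y]
    have hcomp := congrFun hws i
    rw [Finset.sum_apply] at hcomp
    simp only [Pi.smul_apply, smul_eq_mul, Pi.zero_apply] at hcomp
    rw [← hcomp]
    exact (Finset.sum_coe_sort t fun y => w y * y i)
  have hωnn : ∀ z ∈ s, 0 ≤ ω z := by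
    intro z hz
    obtain ⟨y, _, rfl⟩ := Finset.mem_image.1 (hsdef ▸ hz)
    rw [hωpt y]
    exact hw0 _ y.2
  have hωz : ∀ z ∈ s, ω z = 0 := by
    rcases Nat.lt_or_ge s.card (n+2) with hlt | hge
    · exact aux_indep hab (m := n) (fun x hx hm => (hT x hx hm).ne') s hssub
        (by omega) ω hωsum
    · have hc2 : s.card = n + 2 := le_antisymm (hscard ▸ hcard) hge
      set e := s.orderIsoOfFin hc2 with he
      set x : Fin (n+2) → ℝ := fun j => ↑(e j) with hx
      have hxmono : StrictMono x := fun j k hjk => Subtype.coe_lt_coe.2 (e.strictMono hjk)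
      have hxmem : ∀ j, x j ∈ Set.Icc a b := fun j => hssub (e j).2
      have hsum2 : ∀ i : Fin (n+1), ∑ j, (ω (x j)) * g i (x j) = 0 := by
        intro i
        rw [← hωsum i, ← Finset.sum_coe_sort s (fun z => ω z * g i z)]
        exact Equiv.sum_comp e.toEquiv (fun z : ↥s => ω ↑z * g i ↑z)
      have hW := aux_alt hT x hxmono hxmem (fun j => ω (x j)) hsum2
        (fun j => hωnn _ (e j).2)
      intro z hz
      obtain ⟨j, hj⟩ := e.surjective ⟨z, hz⟩
      have := hW j
      rw [hx] at this
      simpa [hj] using this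
  have hwz : ∀ y ∈ t, w y = 0 := by
    intro y hy
    have : ω (pt ⟨y, hy⟩) = 0 :=
      hωz _ (hsdef ▸ Finset.mem_image_of_mem pt (Finset.mem_univ (⟨y, hy⟩ : ↥t)))
    rwa [hωpt ⟨y, hy⟩] at this
  rw [Finset.sum_congr rfl hwz, Finset.sum_const_zero] at hw1
  exact one_ne_zero hw1.symm

private lemma aux_integral_sum_dirac (f : ℝ → ℝ) (Z : Finset ℝ) (cI : ℝ → ENNReal)
    (hc : ∀ z, cI z ≠ ⊤) :
    ∫ x, f x ∂(∑ z ∈ Z, cI z • Measure.dirac z) = ∑ z ∈ Z, (cI z).toReal * f z := by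
  have hint : ∀ z ∈ Z, Integrable f (cI z • Measure.dirac z) := by
    intro z _
    refine Integrable.smul_measure ?_ (hc z)
    have h1 : f =ᵐ[Measure.dirac z] (fun _ => f z) := by
      rw [MeasureTheory.ae_dirac_eq]
      exact Filter.eventually_pure.2 rfl
    exact (integrable_const _).congr h1.symm
  rw [integral_finset_sum_measure hint]
  refine Finset.sum_congr rfl fun z _ => ?_
  rw [integral_smul_measure, integral_dirac, smul_eq_mul]

private lemma aux_realize {a b : ℝ} (hab : a ≤ b) {m : ℕ} {G : Fin m → ℝ → ℝ}
    {z : Fin m → ℝ} (hz : z ∈ convexHull ℝ ((fun x => (fun i => G i x)) '' (Set.Icc a b)))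
    {r : ℝ} (hr : 0 ≤ r) :
    ∃ μ : Measure ℝ, IsFiniteMeasure μ ∧ μ (Set.Icc a b)ᶜ = 0 ∧
      ∀ i, ∫ x, G i x ∂μ = r * z i := by
  classical
  rw [mem_convexHull_iff_exists_fintype] at hz
  obtain ⟨ι, hι, w, y, hw0, hw1, hy, hyz⟩ := hz
  have hpre : ∀ i : ι, ∃ p, p ∈ Set.Icc a b ∧ (fun k => G k p) = y i := fun i => hy i
  choose pt hptmem hpteq using hpre
  set Z : Finset ℝ := Finset.univ.image pt with hZ
  -- use indexed sum over ι directly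
  set μ : Measure ℝ := ∑ i : ι, (ENNReal.ofReal (r * w i)) • Measure.dirac (pt i) with hμ
  have hintd : ∀ (f : ℝ → ℝ) (i : ι),
      Integrable f ((ENNReal.ofReal (r * w i)) • Measure.dirac (pt i)) := by
    intro f i
    refine Integrable.smul_measure ?_ ENNReal.ofReal_ne_top
    have h1 : f =ᵐ[Measure.dirac (pt i)] (fun _ => f (pt i)) := by
      rw [MeasureTheory.ae_dirac_eq]
      exact Filter.eventually_pure.2 rfl
    exact (integrable_const _).congr h1.symm
  refine ⟨μ, ?_, ?_, ?_⟩
  · constructor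
    rw [hμ, Measure.finset_sum_apply]
    refine ENNReal.sum_lt_top.2 fun i _ => ?_
    rw [Measure.smul_apply, smul_eq_mul]
    exact ENNReal.mul_lt_top ENNReal.ofReal_lt_top (measure_lt_top _ _)
  · rw [hμ, Measure.finset_sum_apply]
    refine Finset.sum_eq_zero fun i _ => ?_
    rw [Measure.smul_apply, Measure.dirac_apply' _ measurableSet_Icc.compl, smul_eq_mul]
    rw [Set.indicator_of_notMem (by simpa using hptmem i)]
    simp
  · intro k
    rw [hμ, integral_finset_sum_measure (fun i _ => hintd (G k) i)]
    have hstep : ∀ i : ι, ∫ x, G k x ∂((ENNReal.ofReal (r * w i)) • Measure.dirac (pt i))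
        = r * (w i * y i k) := by
      intro i
      rw [integral_smul_measure, integral_dirac, smul_eq_mul,
        ENNReal.toReal_ofReal (mul_nonneg hr (hw0 i))]
      have : G k (pt i) = y i k := congrFun (hpteq i) k
      rw [this, mul_assoc]
    rw [Finset.sum_congr rfl fun i _ => hstep i, ← Finset.mul_sum]
    congr 1
    have := congrFun hyz k
    rw [Finset.sum_apply] at this
    simpa using this

private lemma aux_finsupp_measure {μ : Measure ℝ} [IsFiniteMeasure μ] {Z : Finset ℝ}
    (h : μ (↑Z : Set ℝ)ᶜ = 0) : μ = ∑ z ∈ Z, μ {z} • Measure.dirac z := by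
  classical
  ext s hs
  rw [Measure.finset_sum_apply]
  have hZm : MeasurableSet (↑Z : Set ℝ) := (Z.finite_toSet).measurableSet
  have h1 : μ s = μ (s ∩ ↑Z) := by
    have hd : μ (s \ ↑Z) = 0 := measure_mono_null (fun x hx => hx.2) h
    rw [← measure_inter_add_diff s hZm, hd, add_zero]
  have h2 : s ∩ ↑Z = ⋃ z ∈ Z, s ∩ {z} := by
    ext p
    simp only [Set.mem_inter_iff, Set.mem_iUnion, Set.mem_singleton_iff, Finset.mem_coe]
    constructor
    · rintro ⟨hp, hpz⟩; exact ⟨p, hpz, hp, rfl⟩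
    · rintro ⟨q, hq, hp, rfl⟩; exact ⟨hp, hq⟩
  rw [h1, h2, measure_biUnion_finset ?_ (fun z _ => hs.inter (measurableSet_singleton z))]
  · refine Finset.sum_congr rfl fun z hz => ?_
    rw [Measure.smul_apply, Measure.dirac_apply' _ hs, smul_eq_mul]
    by_cases hzs : z ∈ s
    · rw [Set.indicator_of_mem hzs, Set.inter_eq_right.2 (Set.singleton_subset_iff.2 hzs)]
      simp
    · rw [Set.indicator_of_notMem hzs]
      have : s ∩ {z} = ∅ := by
        rw [Set.eq_empty_iff_forall_notMem]
        rintro p ⟨hp, rfl⟩; exact hzs hp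
      rw [this]
      simp
  · intro p hp q hq hpq
    refine Set.disjoint_left.2 fun x hx1 hx2 => hpq ?_
    exact (Set.eq_of_mem_singleton hx1.2).symm.trans (Set.eq_of_mem_singleton hx2.2)

private lemma aux_clm_eq_sum {m : ℕ} (f : (Fin m → ℝ) →L[ℝ] ℝ) (y : Fin m → ℝ) :
    f y = ∑ i, y i * f (fun j => if i = j then (1:ℝ) else 0) := by
  have hrep := pi_eq_sum_univ y
  conv_lhs => rw [hrep]
  rw [map_sum]
  refine Finset.sum_congr rfl fun i _ => ?_
  rw [f.map_smul, smul_eq_mul]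

private lemma aux_exists_strictMono {a b : ℝ} (hab : a < b) (m : ℕ) :
    ∃ x : Fin m → ℝ, StrictMono x ∧ ∀ j, x j ∈ Set.Icc a b := by
  classical
  haveI : Infinite ↥(Set.Icc a b) := Set.Icc.infinite hab
  obtain ⟨u, _, hucard⟩ := Infinite.exists_superset_card_eq (∅ : Finset ↥(Set.Icc a b)) m
    (by simp)
  set e := u.orderIsoOfFin hucard with he
  refine ⟨fun j => ↑↑(e j), fun j k hjk => ?_, fun j => (↑(e j) : ↥(Set.Icc a b)).2⟩
  exact Subtype.coe_lt_coe.2 (Subtype.coe_lt_coe.2 (e.strictMono hjk))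

private lemma aux_unique {a b : ℝ} (hab : a < b) {n : ℕ} {G : Fin (n+2) → ℝ → ℝ}
    (hG : ∀ i, ContinuousOn (G i) (Set.Icc a b))
    (hdet : ∀ x : Fin (n+2) → ℝ, StrictMono x → (∀ j, x j ∈ Set.Icc a b) →
      (Matrix.of fun i j => G i (x j)).det ≠ 0)
    (μ1 μ2 : Measure ℝ) (h1f : IsFiniteMeasure μ1) (h2f : IsFiniteMeasure μ2)
    (h1o : μ1 (Set.Icc a b)ᶜ = 0) (h2o : μ2 (Set.Icc a b)ᶜ = 0)
    (hmom : ∀ i, ∫ x, G i x ∂μ1 = ∫ x, G i x ∂μ2)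
    (hni : (fun i => ∫ x, G i x ∂μ1) ∉
      interior {y : Fin (n+2) → ℝ | ∃ r : ℝ, 0 ≤ r ∧ ∃ z ∈ convexHull ℝ
        ((fun x => (fun i => G i x)) '' (Set.Icc a b)), y = r • z}) :
    μ1 = μ2 := by
  classical
  haveI := h1f; haveI := h2f
  set V : ℝ → (Fin (n+2) → ℝ) := fun x => (fun i => G i x) with hV
  set K := convexHull ℝ (V '' (Set.Icc a b)) with hK
  set cone : Set (Fin (n+2) → ℝ) := {y | ∃ r : ℝ, 0 ≤ r ∧ ∃ z ∈ K, y = r • z} with hcone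
  set p : Fin (n+2) → ℝ := fun i => ∫ x, G i x ∂μ1 with hp
  have hVcont : ContinuousOn V (Set.Icc a b) := continuousOn_pi.2 hG
  have hVX : ∀ t ∈ Set.Icc a b, V t ∈ K := fun t ht =>
    subset_convexHull ℝ _ (Set.mem_image_of_mem _ ht)
  have hVconemem : ∀ t ∈ Set.Icc a b, V t ∈ cone := fun t ht =>
    ⟨1, zero_le_one, V t, hVX t ht, (one_smul ℝ _).symm⟩
  have hconv : Convex ℝ cone := by
    rintro y1 ⟨r1, hr1, z1, hz1, rfl⟩ y2 ⟨r2, hr2, z2, hz2, rfl⟩ s t hs ht hst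
    rcases eq_or_lt_of_le (add_nonneg (mul_nonneg hs hr1) (mul_nonneg ht hr2)) with heq0 | hpos
    · -- s*r1 + t*r2 = 0 hence both products zero
      have h1 : s * r1 = 0 := by nlinarith [mul_nonneg hs hr1, mul_nonneg ht hr2]
      have h2 : t * r2 = 0 := by nlinarith [mul_nonneg hs hr1, mul_nonneg ht hr2]
      refine ⟨0, le_refl 0, z1, hz1, ?_⟩
      rw [smul_smul, smul_smul, h1, h2]
      simp
    · set r := s * r1 + t * r2 with hr
      refine ⟨r, hpos.le, (s * r1 / r) • z1 + (t * r2 / r) • z2, ?_, ?_⟩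
      · have := (convex_convexHull ℝ (V '' Set.Icc a b)) hz1 hz2
          (div_nonneg (mul_nonneg hs hr1) hpos.le) (div_nonneg (mul_nonneg ht hr2) hpos.le)
          (by field_simp; exact hr.symm)
        exact this
      · rw [smul_add, smul_smul, smul_smul, smul_smul, smul_smul]
        rw [mul_div_cancel₀ _ hpos.ne', mul_div_cancel₀ _ hpos.ne']
  -- p ∈ cone
  obtain ⟨z1, hz1K, hz1e⟩ := aux_moment_repr hab.le hG μ1 h1o
  have hpcone : p ∈ cone := ⟨(μ1 Set.univ).toReal, ENNReal.toReal_nonneg, z1, hz1K, hz1e⟩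
  -- interior nonempty
  obtain ⟨xx, hxxm, hxxmem⟩ := aux_exists_strictMono hab (n+2)
  set M : Matrix (Fin (n+2)) (Fin (n+2)) ℝ := Matrix.of fun i j => G i (xx j) with hM
  have hMdet : M.det ≠ 0 := hdet xx hxxm hxxmem
  have hMinv : Invertible M := M.invertibleOfIsUnitDet (isUnit_iff_ne_zero.2 hMdet)
  set CLE := (M.toLinearEquiv' hMinv).toContinuousLinearEquiv with hCLE
  have hCLEapp : ∀ w, CLE w = M.mulVec w := by
    intro w
    rw [hCLE]
    rw [LinearEquiv.coe_toContinuousLinearEquiv']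
    rfl
  have hmv : ∀ w : Fin (n+2) → ℝ, M.mulVec w = ∑ j, w j • V (xx j) := by
    intro w
    funext i
    rw [Finset.sum_apply]
    simp only [Matrix.mulVec, dotProduct, Pi.smul_apply, smul_eq_mul, hM,
      Matrix.of_apply, hV]
    exact Finset.sum_congr rfl fun j _ => mul_comm _ _
  have hUopen : IsOpen {w : Fin (n+2) → ℝ | ∀ j, 0 < w j} := by
    rw [Set.setOf_forall]
    exact isOpen_iInter_of_finite fun j => isOpen_lt continuous_const (continuous_apply j)
  have hUsub : CLE '' {w : Fin (n+2) → ℝ | ∀ j, 0 < w j} ⊆ cone := by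
    rintro y ⟨w, hw, rfl⟩
    have hrpos : 0 < ∑ j, w j := Finset.sum_pos (fun j _ => hw j) Finset.univ_nonempty
    refine ⟨∑ j, w j, hrpos.le, Finset.univ.centerMass w (fun j => V (xx j)),
      Finset.centerMass_mem_convexHull _ (fun j _ => (hw j).le) hrpos
        (fun j _ => Set.mem_image_of_mem _ (hxxmem j)), ?_⟩
    rw [hCLEapp, hmv, Finset.centerMass, smul_smul, mul_inv_cancel₀ hrpos.ne', one_smul]
  have hintne : (interior cone).Nonempty := by
    refine ⟨CLE (fun _ => 1), interior_maximal hUsub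
      ((CLE.toHomeomorph.isOpenMap) _ hUopen) ?_⟩
    exact Set.mem_image_of_mem _ (fun j => one_pos)
  -- separation
  obtain ⟨f, hf⟩ := geometric_hahn_banach_open_point (hconv.interior) isOpen_interior hni
  obtain ⟨x0, hx0⟩ := hintne
  have hfne : f x0 < f p := hf x0 hx0
  have hle : ∀ y ∈ cone, f y ≤ f p := by
    intro y hy
    by_contra hgt
    push_neg at hgt
    set A := f x0 - f y with hA
    set d := f y - f p with hd
    have hdpos : 0 < d := by simp [hd]; linarith
    set t := min 1 (d / (2 * (|A| + 1))) with ht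
    have ht0 : 0 < t := lt_min one_pos (by positivity)
    have ht1 : t ≤ 1 := min_le_left _ _
    have hmemi : y + t • (x0 - y) ∈ interior cone := by
      refine hconv.add_smul_mem_interior hy ?_ ⟨ht0, ht1⟩
      simpa using hx0
    have hval : f (y + t • (x0 - y)) = f y + t * A := by
      rw [f.map_add, f.map_smul, f.map_sub, smul_eq_mul, hA]
    have hlt := hf _ hmemi
    rw [hval] at hlt
    have h5 : -(t * |A|) ≤ t * A := by nlinarith [neg_abs_le A]
    have h6 : t * |A| ≤ (d / (2 * (|A| + 1))) * |A| :=
      mul_le_mul_of_nonneg_right (min_le_right _ _) (abs_nonneg A)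
    have h7 : (d / (2 * (|A| + 1))) * |A| ≤ d / 2 := by
      rw [div_mul_eq_mul_div, div_le_div_iff₀ (by positivity) (by norm_num)]
      nlinarith [abs_nonneg A]
    have : f p < f y + t * A := by
      have : f y + t * A ≥ f y - d / 2 := by linarith
      have hfy : f y = f p + d := by rw [hd]; ring
      linarith
    linarith
  have hf0 : f p = 0 := by
    have h0c : (0 : Fin (n+2) → ℝ) ∈ cone :=
      ⟨0, le_refl 0, V a, hVX a ⟨le_refl a, hab.le⟩, (zero_smul ℝ _).symm⟩
    have hge : (0:ℝ) ≤ f p := by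
      have := hle 0 h0c
      rwa [map_zero] at this
    obtain ⟨r, hr, z, hzK, hze⟩ := hpcone
    have h2c : (2:ℝ) • p ∈ cone := ⟨2 * r, by positivity, z, hzK, by rw [hze, smul_smul]⟩
    have hle2 := hle _ h2c
    rw [f.map_smul, smul_eq_mul] at hle2
    linarith
  -- the function u
  set u : ℝ → ℝ := fun t => -(f (V t)) with hu
  have hucont : ContinuousOn u (Set.Icc a b) := (f.continuous.comp_continuousOn hVcont).neg
  have hunn : ∀ t ∈ Set.Icc a b, 0 ≤ u t := by
    intro t ht
    have := hle _ (hVconemem t ht)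
    rw [hf0] at this
    simp [hu]
    linarith
  -- the zero set of f ∘ V
  set Zset : Set ℝ := {t : ℝ | t ∈ Set.Icc a b ∧ f (V t) = 0} with hZset
  have hno : ∀ s : Finset ℝ, ↑s ⊆ Zset → s.card ≠ n+2 := by
    intro s hsZ hscard
    set e := s.orderIsoOfFin hscard with he
    set x : Fin (n+2) → ℝ := fun j => ↑(e j) with hxd
    have hxm : StrictMono x := fun j k hjk => Subtype.coe_lt_coe.2 (e.strictMono hjk)
    have hxmem : ∀ j, x j ∈ Set.Icc a b := fun j => (hsZ (e j).2).1
    have hxz : ∀ j, f (V (x j)) = 0 := fun j => (hsZ (e j).2).2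
    set F : Fin (n+2) → ℝ := fun i => f (fun j => if i = j then (1:ℝ) else 0) with hF
    have hvm : (Matrix.of fun i j => G i (x j)).vecMul F = 0 := by
      funext j
      show ∑ i, F i * (Matrix.of fun i j => G i (x j)) i j = (0 : Fin (n+2) → ℝ) j
      have h1 := aux_clm_eq_sum f (V (x j))
      rw [hxz j] at h1
      rw [Pi.zero_apply]
      calc ∑ i, F i * (Matrix.of fun i j => G i (x j)) i j
          = ∑ i, V (x j) i * F i := by
            refine Finset.sum_congr rfl fun i _ => ?_
            rw [Matrix.of_apply, hV]
            ring
        _ = 0 := h1.symm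
    have hF0 : F = 0 := Matrix.eq_zero_of_vecMul_eq_zero (hdet x hxm hxmem) hvm
    have hfx0 : f x0 = 0 := by
      rw [aux_clm_eq_sum f x0]
      refine Finset.sum_eq_zero fun i _ => ?_
      have : F i = 0 := congrFun hF0 i
      rw [hF] at this
      simp only at this
      rw [this, mul_zero]
    rw [hf0] at hfne
    linarith
  have hZfin : Zset.Finite := by
    by_contra hinf
    obtain ⟨s, hsub, hcard⟩ := Set.Infinite.exists_subset_card_eq hinf (n+2)
    exact hno s hsub hcard
  set Zf := hZfin.toFinset with hZf
  have hZcoe : ↑Zf = Zset := hZfin.coe_toFinset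
  have hZsub : ↑Zf ⊆ Set.Icc a b := by
    intro z hz
    rw [hZcoe] at hz
    exact hz.1
  have hZcard : Zf.card ≤ n+1 := by
    by_contra hc
    push_neg at hc
    obtain ⟨s, hsub, hcard⟩ := Finset.exists_subset_card_eq (show n+2 ≤ Zf.card by omega)
    exact hno s (fun z hz => hZcoe ▸ (Finset.coe_subset.2 hsub) hz) hcard
  -- both measures vanish outside Zf
  have hout : ∀ (μ : Measure ℝ), IsFiniteMeasure μ → μ (Set.Icc a b)ᶜ = 0 →
      ((fun i => ∫ x, G i x ∂μ) = p) → μ (↑Zf : Set ℝ)ᶜ = 0 := by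
    intro μ hfin ho hmomμ
    haveI := hfin
    have hVint : Integrable V μ := aux_integrable_s11 hab.le ho hVcont
    have hcomp : (fun i => ∫ x, G i x ∂μ) = ∫ x, V x ∂μ := by
      funext i
      have h := ContinuousLinearMap.integral_comp_comm
        (ContinuousLinearMap.proj (R := ℝ) (φ := fun _ : Fin (n+2) => ℝ) i) hVint
      simpa [hV] using h
    have hintu : Integrable u μ := (f.integrable_comp hVint).neg
    have hiu : ∫ t, u t ∂μ = 0 := by
      rw [hu]
      rw [integral_neg, ContinuousLinearMap.integral_comp_comm f hVint]
      rw [← hcomp, hmomμ, hf0, neg_zero]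
    have hae0 : u =ᵐ[μ] 0 := by
      refine (integral_eq_zero_iff_of_nonneg_ae ?_ hintu).1 hiu
      filter_upwards [aux_ae_mem ho] with t ht
      exact hunn t ht
    have hne0 : μ {t | u t ≠ 0} = 0 := by
      have h := hae0
      rw [Filter.EventuallyEq, ae_iff] at h
      simpa using h
    refine measure_mono_null ?_ (measure_union_null ho hne0)
    intro t ht
    by_cases htX : t ∈ Set.Icc a b
    · right
      have htZ : t ∉ Zset := by
        rw [← hZcoe]
        exact ht
      have : f (V t) ≠ 0 := fun hfv => htZ ⟨htX, hfv⟩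
      simp only [Set.mem_setOf_eq, hu]
      intro hcontra
      exact this (by linarith [neg_eq_zero.1 hcontra])
    · exact Or.inl htX
  have hout1 := hout μ1 h1f h1o rfl
  have hout2 := hout μ2 h2f h2o (funext fun i => (hmom i).symm)
  have hrepr1 := aux_finsupp_measure (μ := μ1) hout1
  have hrepr2 := aux_finsupp_measure (μ := μ2) hout2
  have hint1 : ∀ i, ∫ x, G i x ∂μ1 = ∑ z ∈ Zf, (μ1 {z}).toReal * G i z := by
    intro i
    conv_lhs => rw [hrepr1]
    exact aux_integral_sum_dirac (G i) Zf _ (fun z => measure_ne_top μ1 _)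
  have hint2 : ∀ i, ∫ x, G i x ∂μ2 = ∑ z ∈ Zf, (μ2 {z}).toReal * G i z := by
    intro i
    conv_lhs => rw [hrepr2]
    exact aux_integral_sum_dirac (G i) Zf _ (fun z => measure_ne_top μ2 _)
  have hsum : ∀ i, ∑ z ∈ Zf, ((fun z => (μ1 {z}).toReal - (μ2 {z}).toReal) z) * G i z = 0 := by
    intro i
    simp only [sub_mul, Finset.sum_sub_distrib]
    rw [← hint1 i, ← hint2 i, hmom i, sub_self]
  have hzero := aux_indep hab (m := n+1) hdet Zf hZsub (by omega) _ hsum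
  have hmeq : ∀ z ∈ Zf, μ1 {z} = μ2 {z} := by
    intro z hz
    have h := hzero z hz
    refine (ENNReal.toReal_eq_toReal_iff' (measure_ne_top _ _) (measure_ne_top _ _)).1 ?_
    linarith
  rw [hrepr1, hrepr2]
  exact Finset.sum_congr rfl fun z hz => by rw [hmeq z hz]

/-- If `(g_0, …, g_n)` and `(g_0, …, g_{n+1})` are T₊-systems on `[a, b]` and
`M_c ≠ ∅`, then `∫ g_{n+1} dμ` attains its maximum (resp. minimum) over
`M_c` at a unique measure `μ_max` (resp. `μ_min`). -/
theorem tplus_unique_max_min (a b : ℝ) (hab : a < b) (n : ℕ)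
    (g : Fin (n + 1) → ℝ → ℝ) (gtop : ℝ → ℝ)
    (hg : ∀ i, ContinuousOn (g i) (Set.Icc a b))
    (hgtop : ContinuousOn gtop (Set.Icc a b))
    (hT : IsTPlusSystem a b g)
    (hT' : IsTPlusSystem a b (Fin.snoc g gtop))
    (c : Fin (n + 1) → ℝ) (hc : ∃ μ : Measure ℝ, MemMc a b g c μ) :
    (∃! μmax : Measure ℝ, MemMc a b g c μmax ∧
      ∀ μ : Measure ℝ, MemMc a b g c μ → ∫ x, gtop x ∂μ ≤ ∫ x, gtop x ∂μmax) ∧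
    (∃! μmin : Measure ℝ, MemMc a b g c μmin ∧
      ∀ μ : Measure ℝ, MemMc a b g c μ → ∫ x, gtop x ∂μmin ≤ ∫ x, gtop x ∂μ) := by
  classical
  obtain ⟨μ0, hμ0⟩ := hc
  set G : Fin (n+2) → ℝ → ℝ := Fin.snoc g gtop with hGdef
  have hGlast : G (Fin.last (n+1)) = gtop := by
    rw [hGdef]; exact Fin.snoc_last _ _
  have hGcast : ∀ i : Fin (n+1), G (Fin.castSucc i) = g i := by
    intro i; rw [hGdef]; exact Fin.snoc_castSucc _ _ _
  have hGc : ∀ i, ContinuousOn (G i) (Set.Icc a b) := by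
    intro i
    induction i using Fin.lastCases with
    | last => rw [hGlast]; exact hgtop
    | cast i => rw [hGcast]; exact hg i
  have hdet' : ∀ x : Fin (n+2) → ℝ, StrictMono x → (∀ j, x j ∈ Set.Icc a b) →
      (Matrix.of fun i j => G i (x j)).det ≠ 0 := fun x hx hm => (hT' x hx hm).ne'
  -- mass bound
  have hK1cpt : IsCompact (convexHull ℝ ((fun x => (fun i => g i x)) '' (Set.Icc a b))) :=
    aux_isCompact_convexHull_s11 (isCompact_Icc.image_of_continuousOn (continuousOn_pi.2 hg))
  have hK1ne : (convexHull ℝ ((fun x => (fun i => g i x)) '' (Set.Icc a b))).Nonempty :=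
    ⟨_, subset_convexHull ℝ _ (Set.mem_image_of_mem _ (Set.left_mem_Icc.2 hab.le))⟩
  obtain ⟨z0, hz0K, hz0min⟩ := hK1cpt.exists_isMinOn hK1ne continuous_norm.continuousOn
  have hz0pos : 0 < ‖z0‖ := by
    refine norm_pos_iff.2 fun h0 => ?_
    rw [h0] at hz0K
    exact aux_zero_not_mem hab hT hz0K
  set R := ‖c‖ / ‖z0‖ with hR
  have hRnn : 0 ≤ R := div_nonneg (norm_nonneg _) (norm_nonneg _)
  have hmass : ∀ μ : Measure ℝ, MemMc a b g c μ → (μ Set.univ).toReal ≤ R := by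
    intro μ hμ
    obtain ⟨hfin, ho, hmomμ⟩ := hμ
    haveI := hfin
    obtain ⟨z, hzK, hze⟩ := aux_moment_repr hab.le hg μ ho
    have hce : c = (μ Set.univ).toReal • z := by
      rw [← hze]; funext i; exact (hmomμ i).symm
    have h1 : ‖c‖ = (μ Set.univ).toReal * ‖z‖ := by
      rw [hce, norm_smul, Real.norm_eq_abs, abs_of_nonneg ENNReal.toReal_nonneg]
    have h2 : ‖z0‖ ≤ ‖z‖ := hz0min hzK
    rw [hR, le_div_iff₀ hz0pos]
    nlinarith [ENNReal.toReal_nonneg (a := μ Set.univ)]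
  -- moment vectors
  set mv : Measure ℝ → (Fin (n+2) → ℝ) := fun μ => fun i => ∫ x, G i x ∂μ with hmv
  have hgtopint : ∀ (μ : Measure ℝ), ∫ x, gtop x ∂μ = mv μ (Fin.last (n+1)) := by
    intro μ
    rw [hmv]
    simp only
    rw [hGlast]
  set K := convexHull ℝ ((fun x => (fun i => G i x)) '' (Set.Icc a b)) with hK
  have hKcpt : IsCompact K :=
    aux_isCompact_convexHull_s11 (isCompact_Icc.image_of_continuousOn (continuousOn_pi.2 hGc))
  set D : Set (Fin (n+2) → ℝ) :=
    (fun rz : ℝ × (Fin (n+2) → ℝ) => rz.1 • rz.2) '' ((Set.Icc 0 R) ×ˢ K) with hD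
  have hDcpt : IsCompact D := (isCompact_Icc.prod hKcpt).image (continuous_fst.smul continuous_snd)
  set E : Set (Fin (n+2) → ℝ) := D ∩ {d | ∀ i : Fin (n+1), d (Fin.castSucc i) = c i} with hE
  have hEcpt : IsCompact E := hDcpt.inter_right (by
    have : {d : Fin (n+2) → ℝ | ∀ i : Fin (n+1), d (Fin.castSucc i) = c i}
        = ⋂ i : Fin (n+1), {d : Fin (n+2) → ℝ | d (Fin.castSucc i) = c i} := by
      ext d; simp [Set.mem_iInter]
    rw [this]
    exact isClosed_iInter fun i => isClosed_eq (continuous_apply _) continuous_const)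
  have hmvD : ∀ μ : Measure ℝ, MemMc a b g c μ → mv μ ∈ E := by
    intro μ hμ
    obtain ⟨hfin, ho, hmomμ⟩ := hμ
    haveI := hfin
    obtain ⟨z, hzK, hze⟩ := aux_moment_repr hab.le hGc μ ho
    constructor
    · exact ⟨((μ Set.univ).toReal, z),
        ⟨⟨ENNReal.toReal_nonneg, hmass μ ⟨hfin, ho, hmomμ⟩⟩, hzK⟩, hze.symm⟩
    · intro i
      show (∫ x, G (Fin.castSucc i) x ∂μ) = c i
      rw [hGcast i]
      exact hmomμ i
  have hreal : ∀ d ∈ E, ∃ μ : Measure ℝ, MemMc a b g c μ ∧ mv μ = d := by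
    rintro d ⟨⟨⟨r, z⟩, ⟨⟨hr0, _⟩, hzK⟩, rfl⟩, hdc⟩
    obtain ⟨μ, hfin, ho, hint⟩ := aux_realize hab.le hzK hr0
    have hmvd : mv μ = r • z := by
      funext i
      rw [hmv]
      simp only
      rw [hint i, Pi.smul_apply, smul_eq_mul]
    refine ⟨μ, ⟨hfin, ho, fun i => ?_⟩, hmvd⟩
    have := hdc i
    simp only [Set.mem_setOf_eq] at this
    rw [← hGcast i, ← this]
    show (∫ x, G (Fin.castSucc i) x ∂μ) = (r • z) (Fin.castSucc i)
    rw [hint (Fin.castSucc i), Pi.smul_apply, smul_eq_mul]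
  -- realization of points in the cone with correct first coordinates
  set cone : Set (Fin (n+2) → ℝ) := {y | ∃ r : ℝ, 0 ≤ r ∧ ∃ z ∈ convexHull ℝ
      ((fun x => (fun i => G i x)) '' (Set.Icc a b)), y = r • z} with hcone
  -- perturbation argument: optimal measures have non-interior moment vectors
  have hnotint : ∀ μ' : Measure ℝ, MemMc a b g c μ' →
      ((∀ μ : Measure ℝ, MemMc a b g c μ → ∫ x, gtop x ∂μ ≤ ∫ x, gtop x ∂μ') ∨
       (∀ μ : Measure ℝ, MemMc a b g c μ → ∫ x, gtop x ∂μ' ≤ ∫ x, gtop x ∂μ)) →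
      mv μ' ∉ interior cone := by
    intro μ' hμ' hopt hmem
    obtain ⟨ε, hε, hball⟩ := Metric.isOpen_iff.1 isOpen_interior _ hmem
    have hpert : ∀ σ : ℝ, |σ| < ε → ∃ μ'' : Measure ℝ, MemMc a b g c μ'' ∧
        ∫ x, gtop x ∂μ'' = ∫ x, gtop x ∂μ' + σ := by
      intro σ hσ
      set sgl : Fin (n+2) → ℝ := Pi.single (Fin.last (n+1)) (1:ℝ) with hsgl
      set q : Fin (n+2) → ℝ := mv μ' + σ • sgl with hq
      have hsglnorm : ‖sgl‖ ≤ 1 := by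
        refine (pi_norm_le_iff_of_nonneg zero_le_one).2 fun i => ?_
        rw [hsgl]
        rcases eq_or_ne i (Fin.last (n+1)) with rfl | hne
        · simp
        · rw [Pi.single_eq_of_ne hne]
          simp
      have hqball : q ∈ Metric.ball (mv μ') ε := by
        rw [Metric.mem_ball, dist_eq_norm, hq, add_sub_cancel_left, norm_smul,
          Real.norm_eq_abs]
        calc |σ| * ‖sgl‖ ≤ |σ| * 1 := mul_le_mul_of_nonneg_left hsglnorm (abs_nonneg σ)
          _ = |σ| := mul_one _
          _ < ε := hσ
      have hqcone : q ∈ cone := interior_subset (hball hqball)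
      obtain ⟨r, hr0, z, hzK, hqe⟩ := hqcone
      obtain ⟨μ'', hfin, ho, hint⟩ := aux_realize hab.le hzK hr0
      have hμ''int : ∀ i, ∫ x, G i x ∂μ'' = q i := by
        intro i
        rw [hint i, hqe, Pi.smul_apply, smul_eq_mul]
      have hsglcast : ∀ i : Fin (n+1), sgl (Fin.castSucc i) = 0 := by
        intro i
        simp [hsgl, Pi.single_apply, (Fin.castSucc_lt_last i).ne]
      refine ⟨μ'', ⟨hfin, ho, fun i => ?_⟩, ?_⟩
      · rw [← hGcast i, hμ''int (Fin.castSucc i), hq]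
        simp only [Pi.add_apply, Pi.smul_apply, smul_eq_mul, hsglcast i, mul_zero, add_zero]
        exact (hmvD μ' hμ').2 i
      · rw [hgtopint μ'', hgtopint μ']
        show (∫ x, G (Fin.last (n+1)) x ∂μ'') = mv μ' (Fin.last (n+1)) + σ
        rw [hμ''int (Fin.last (n+1)), hq]
        simp [hsgl]
    rcases hopt with hmax | hmin
    · obtain ⟨μ'', hμ''M, hμ''e⟩ := hpert (ε/2) (by rw [abs_of_pos (by linarith)]; linarith)
      have := hmax μ'' hμ''M
      rw [hμ''e] at this
      linarith
    · obtain ⟨μ'', hμ''M, hμ''e⟩ := hpert (-(ε/2)) (by rw [abs_neg, abs_of_pos (by linarith)]; linarith)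
      have := hmin μ'' hμ''M
      rw [hμ''e] at this
      linarith
  -- uniqueness of optimizers
  have huniq : ∀ μ1 μ2 : Measure ℝ, MemMc a b g c μ1 → MemMc a b g c μ2 →
      (∫ x, gtop x ∂μ1 = ∫ x, gtop x ∂μ2) →
      mv μ1 ∉ interior cone → μ1 = μ2 := by
    intro μ1 μ2 h1 h2 htop hni
    refine aux_unique hab hGc hdet' μ1 μ2 h1.1 h2.1 h1.2.1 h2.2.1 ?_ hni
    intro i
    induction i using Fin.lastCases with
    | last =>
      rw [show (∫ x, G (Fin.last (n+1)) x ∂μ1) = ∫ x, gtop x ∂μ1 from by rw [hGlast],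
        show (∫ x, G (Fin.last (n+1)) x ∂μ2) = ∫ x, gtop x ∂μ2 from by rw [hGlast], htop]
    | cast i =>
      rw [show (∫ x, G (Fin.castSucc i) x ∂μ1) = ∫ x, g i x ∂μ1 from by rw [hGcast i],
        show (∫ x, G (Fin.castSucc i) x ∂μ2) = ∫ x, g i x ∂μ2 from by rw [hGcast i],
        h1.2.2 i, h2.2.2 i]
  -- existence
  have hEne : E.Nonempty := ⟨mv μ0, hmvD μ0 hμ0⟩
  have hcontlast : ContinuousOn (fun d : Fin (n+2) → ℝ => d (Fin.last (n+1))) E :=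
    (continuous_apply _).continuousOn
  obtain ⟨dmax, hdmaxE, hdmaxmax⟩ := hEcpt.exists_isMaxOn hEne hcontlast
  obtain ⟨μmax, hμmaxM, hμmaxmv⟩ := hreal dmax hdmaxE
  obtain ⟨dmin, hdminE, hdminmin⟩ := hEcpt.exists_isMinOn hEne hcontlast
  obtain ⟨μmin, hμminM, hμminmv⟩ := hreal dmin hdminE
  have hmaxprop : ∀ μ : Measure ℝ, MemMc a b g c μ → ∫ x, gtop x ∂μ ≤ ∫ x, gtop x ∂μmax := by
    intro μ hμ
    have h1 := hdmaxmax (hmvD μ hμ)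
    rw [hgtopint μ, hgtopint μmax, hμmaxmv]
    exact h1
  have hminprop : ∀ μ : Measure ℝ, MemMc a b g c μ → ∫ x, gtop x ∂μmin ≤ ∫ x, gtop x ∂μ := by
    intro μ hμ
    have h1 := hdminmin (hmvD μ hμ)
    rw [hgtopint μ, hgtopint μmin, hμminmv]
    exact h1
  constructor
  · refine ⟨μmax, ⟨hμmaxM, hmaxprop⟩, ?_⟩
    rintro μ' ⟨hμ'M, hμ'max⟩
    refine huniq μ' μmax hμ'M hμmaxM
      (le_antisymm (hmaxprop μ' hμ'M) (hμ'max μmax hμmaxM)) ?_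
    exact hnotint μ' hμ'M (Or.inl hμ'max)
  · refine ⟨μmin, ⟨hμminM, hminprop⟩, ?_⟩
    rintro μ' ⟨hμ'M, hμ'min⟩
    refine huniq μ' μmin hμ'M hμminM
      (le_antisymm (hμ'min μmin hμminM) (hminprop μ' hμ'M)) ?_
    exact hnotint μ' hμ'M (Or.inr hμ'min)
end

section
/- Let a < b be real numbers, let g_2 : [a,b] → ℝ be continuous and strictly convex, let c_0 ≥ 0, and let c_1 ∈ [c_0·a, c_0·b]. Then for every finite nonnegative Borel measure μ on [a,b] with μ([a,b]) = c_0 and ∫ x dμ(x) = c_1 one has ∫ g_2 dμ ≤ ((c_0 b − c_1)/(b − a))·g_2(a) + ((c_1 − c_0 a)/(b − a))·g_2(b), with equality if and only if μ = ((c_0 b − c_1)/(b − a))·δ_a + ((c_1 − c_0 a)/(b − a))·δ_b, where δ_x denotes the Dirac probability measure at the point x. -/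
open MeasureTheory

/-- For a continuous strictly convex function `g_2` on `[a, b]` and a finite
nonnegative Borel measure `μ` on `[a, b]` of total mass `c_0 ≥ 0` and first
moment `c_1 ∈ [c_0 a, c_0 b]`, one has
`∫ g_2 dμ ≤ ((c_0 b - c_1)/(b - a)) g_2(a) + ((c_1 - c_0 a)/(b - a)) g_2(b)`,
with equality iff
`μ = ((c_0 b - c_1)/(b - a)) δ_a + ((c_1 - c_0 a)/(b - a)) δ_b`. -/
theorem convex_moment_max (a b : ℝ) (hab : a < b) (g2 : ℝ → ℝ)
    (hg2c : ContinuousOn g2 (Set.Icc a b))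
    (hg2conv : StrictConvexOn ℝ (Set.Icc a b) g2)
    (c0 : ℝ) (hc0 : 0 ≤ c0) (c1 : ℝ) (hc1 : c1 ∈ Set.Icc (c0 * a) (c0 * b)) :
    ∀ μ : Measure ℝ, μ (Set.Icc a b)ᶜ = 0 → μ (Set.Icc a b) = ENNReal.ofReal c0 →
      (∫ x, x ∂μ) = c1 →
      (∫ x, g2 x ∂μ ≤
          (c0 * b - c1) / (b - a) * g2 a + (c1 - c0 * a) / (b - a) * g2 b) ∧
      ((∫ x, g2 x ∂μ =
          (c0 * b - c1) / (b - a) * g2 a + (c1 - c0 * a) / (b - a) * g2 b) ↔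
        μ = ENNReal.ofReal ((c0 * b - c1) / (b - a)) • Measure.dirac a +
            ENNReal.ofReal ((c1 - c0 * a) / (b - a)) • Measure.dirac b) := by
  intro μ hcompl hmass hmom
  have hba : (0:ℝ) < b - a := sub_pos.2 hab
  have hba' : b - a ≠ 0 := ne_of_gt hba
  have hα0 : 0 ≤ (c0 * b - c1) / (b - a) :=
    div_nonneg (by linarith [hc1.2]) hba.le
  have hβ0 : 0 ≤ (c1 - c0 * a) / (b - a) :=
    div_nonneg (by linarith [hc1.1]) hba.le
  have haI : a ∈ Set.Icc a b := ⟨le_refl a, hab.le⟩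
  have hbI : b ∈ Set.Icc a b := ⟨hab.le, le_refl b⟩
  -- projection onto [a,b]
  set p : ℝ → ℝ := fun x => max a (min b x) with hp_def
  have hp_mem : ∀ x, p x ∈ Set.Icc a b := fun x =>
    ⟨le_max_left _ _, max_le hab.le (min_le_left _ _)⟩
  have hp_cont : Continuous p := continuous_const.max (continuous_const.min continuous_id)
  have hp_id : ∀ x ∈ Set.Icc a b, p x = x := by
    intro x hx
    simp only [hp_def]
    rw [min_eq_right hx.2, max_eq_right hx.1]
  have hae : ∀ᵐ x ∂μ, x ∈ Set.Icc a b := by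
    rw [ae_iff]
    exact hcompl
  -- the secant line
  set L : ℝ → ℝ := fun x => ((b - x) * g2 a + (x - a) * g2 b) / (b - a) with hL_def
  have hL_cont : Continuous L := by fun_prop
  have key : ∀ y ∈ Set.Icc a b, g2 y ≤ L y := by
    intro y hy
    have ht0 : (0:ℝ) ≤ (b - y) / (b - a) := div_nonneg (by linarith [hy.2]) hba.le
    have hs0 : (0:ℝ) ≤ (y - a) / (b - a) := div_nonneg (by linarith [hy.1]) hba.le
    have hts : (b - y) / (b - a) + (y - a) / (b - a) = 1 := by field_simp; ring
    have := hg2conv.convexOn.2 haI hbI ht0 hs0 hts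
    simp only [smul_eq_mul] at this
    have hy' : (b - y) / (b - a) * a + (y - a) / (b - a) * b = y := by
      field_simp
      ring
    rw [hy'] at this
    calc g2 y ≤ (b - y) / (b - a) * g2 a + (y - a) / (b - a) * g2 b := this
      _ = L y := by simp only [hL_def]; field_simp
  have keylt : ∀ y ∈ Set.Ioo a b, g2 y < L y := by
    intro y hy
    have ht0 : (0:ℝ) < (b - y) / (b - a) := div_pos (by linarith [hy.2]) hba
    have hs0 : (0:ℝ) < (y - a) / (b - a) := div_pos (by linarith [hy.1]) hba
    have hts : (b - y) / (b - a) + (y - a) / (b - a) = 1 := by field_simp; ring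
    have := hg2conv.2 haI hbI (ne_of_lt hab) ht0 hs0 hts
    simp only [smul_eq_mul] at this
    have hy' : (b - y) / (b - a) * a + (y - a) / (b - a) * b = y := by
      field_simp
      ring
    rw [hy'] at this
    calc g2 y < (b - y) / (b - a) * g2 a + (y - a) / (b - a) * g2 b := this
      _ = L y := by simp only [hL_def]; field_simp
  -- μ is finite
  haveI : IsFiniteMeasure μ := by
    constructor
    rw [← measure_add_measure_compl measurableSet_Icc (μ := μ), hmass, hcompl, add_zero]
    exact ENNReal.ofReal_lt_top
  have hμuniv : μ Set.univ = ENNReal.ofReal c0 := by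
    rw [← measure_add_measure_compl measurableSet_Icc (μ := μ), hmass, hcompl, add_zero]
  -- integrability
  obtain ⟨C, hC⟩ := isCompact_Icc.exists_bound_of_continuousOn hg2c
  have hIg : Integrable (fun x => g2 (p x)) μ := by
    refine ⟨((hg2c.comp_continuous hp_cont hp_mem).aestronglyMeasurable), ?_⟩
    exact HasFiniteIntegral.of_bounded (C := C) (ae_of_all _ fun x => hC _ (hp_mem x))
  have hIp : Integrable p μ := by
    refine ⟨hp_cont.aestronglyMeasurable, ?_⟩
    refine HasFiniteIntegral.of_bounded (C := max |a| |b|) (ae_of_all _ fun x => ?_)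
    have h1 := (hp_mem x).1
    have h2 := (hp_mem x).2
    rw [Real.norm_eq_abs, abs_le]
    constructor
    · calc -(max |a| |b|) ≤ -|a| := by simp [neg_le_neg_iff]
        _ ≤ a := neg_abs_le a
        _ ≤ p x := h1
    · calc p x ≤ b := h2
        _ ≤ |b| := le_abs_self b
        _ ≤ max |a| |b| := le_max_right _ _
  -- integral of g2 equals integral of g2 ∘ p
  have hIg2 : Integrable g2 μ := by
    refine hIg.congr ?_
    filter_upwards [hae] with x hx
    rw [hp_id x hx]
  have hEq1 : ∫ x, g2 x ∂μ = ∫ x, g2 (p x) ∂μ := by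
    refine integral_congr_ae ?_
    filter_upwards [hae] with x hx
    rw [hp_id x hx]
  have hEqp : ∫ x, p x ∂μ = c1 := by
    rw [← hmom]
    refine integral_congr_ae ?_
    filter_upwards [hae] with x hx
    rw [hp_id x hx]
  -- integral of L ∘ p
  have hLp_eq : (fun x => L (p x)) =
      fun x => (b * g2 a - a * g2 b) / (b - a) + (g2 b - g2 a) / (b - a) * p x := by
    funext x
    simp only [hL_def]
    field_simp
    ring
  have hILp' : Integrable (fun x => L (p x)) μ := by
    rw [hLp_eq]
    exact (integrable_const _).add (hIp.const_mul _)
  have hintLp : ∫ x, L (p x) ∂μ =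
      (c0 * b - c1) / (b - a) * g2 a + (c1 - c0 * a) / (b - a) * g2 b := by
    rw [hLp_eq, integral_add (integrable_const _) (hIp.const_mul _),
      integral_const, integral_const_mul, hEqp, measureReal_def, hμuniv,
      ENNReal.toReal_ofReal hc0]
    simp only [smul_eq_mul]
    field_simp
    ring
  have hle : ∫ x, g2 x ∂μ ≤
      (c0 * b - c1) / (b - a) * g2 a + (c1 - c0 * a) / (b - a) * g2 b := by
    rw [hEq1, ← hintLp]
    exact integral_mono hIg hILp' fun x => key _ (hp_mem x)
  refine ⟨hle, ?_, ?_⟩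
  · -- equality implies measure form
    intro heq
    -- the integral of the nonnegative function L∘p - g2∘p vanishes
    have hzero : ∫ x, (L (p x) - g2 (p x)) ∂μ = 0 := by
      rw [integral_sub hILp' hIg, hintLp, ← hEq1, heq, sub_self]
    have hnn : 0 ≤ fun x => L (p x) - g2 (p x) := by
      intro x
      have := key _ (hp_mem x)
      simp only [Pi.zero_apply]
      linarith
    have hae0 : (fun x => L (p x) - g2 (p x)) =ᵐ[μ] 0 :=
      (integral_eq_zero_iff_of_nonneg hnn (hILp'.sub hIg)).1 hzero
    have hAE : ∀ᵐ x ∂μ, L x = g2 x := by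
      filter_upwards [hae0, hae] with x h1 h2
      rw [hp_id x h2] at h1
      simp only [Pi.zero_apply] at h1
      linarith
    have hIoo : μ (Set.Ioo a b) = 0 := by
      refine measure_mono_null ?_ (ae_iff.1 hAE)
      intro x hx
      exact fun h => (keylt x hx).ne' h
    have hpairc : μ ({a, b} : Set ℝ)ᶜ = 0 := by
      refine measure_mono_null ?_ (measure_union_null hcompl hIoo)
      intro x hx
      simp only [Set.mem_compl_iff, Set.mem_insert_iff, Set.mem_singleton_iff,
        not_or] at hx
      by_cases hxI : x ∈ Set.Icc a b
      · exact Or.inr ⟨lt_of_le_of_ne hxI.1 (Ne.symm hx.1), lt_of_le_of_ne hxI.2 hx.2⟩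
      · exact Or.inl hxI
    have hpairM : MeasurableSet ({a, b} : Set ℝ) :=
      (measurableSet_singleton a).union (measurableSet_singleton b)
    have hμrep : μ = μ {a} • Measure.dirac a + μ {b} • Measure.dirac b := by
      ext s hs
      rw [Measure.add_apply, Measure.smul_apply, Measure.smul_apply,
        Measure.dirac_apply' _ hs, Measure.dirac_apply' _ hs, smul_eq_mul, smul_eq_mul]
      have hsplit : μ s = μ (s ∩ {a, b}) := by
        have h1 : μ (s ∩ {a, b}) + μ (s \ {a, b}) = μ s :=
          measure_inter_add_diff s hpairM
        have h2 : μ (s \ {a, b}) = 0 :=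
          measure_mono_null (Set.diff_subset_compl s {a, b}) hpairc
        rw [h2, add_zero] at h1
        exact h1.symm
      rw [hsplit]
      have hpair_sum : μ ({a, b} : Set ℝ) = μ {a} + μ {b} := by
        rw [Set.insert_eq]
        exact measure_union (by simp [Set.disjoint_singleton, hab.ne])
          (measurableSet_singleton b)
      by_cases hA : a ∈ s <;> by_cases hB : b ∈ s
      · have : s ∩ {a, b} = {a, b} :=
          Set.inter_eq_right.2 (by
            intro x hx
            rcases hx with h | h
            · exact h ▸ hA
            · exact h ▸ hB)
        rw [this, hpair_sum]
        simp [Set.indicator_of_mem, hA, hB]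
      · have : s ∩ {a, b} = {a} := by
          ext x
          simp only [Set.mem_inter_iff, Set.mem_insert_iff, Set.mem_singleton_iff]
          constructor
          · rintro ⟨hxs, h | h⟩
            · exact h
            · exact absurd (h ▸ hxs) hB
          · rintro rfl
            exact ⟨hA, Or.inl rfl⟩
        rw [this]
        simp [Set.indicator_of_mem, Set.indicator_of_notMem, hA, hB]
      · have : s ∩ {a, b} = {b} := by
          ext x
          simp only [Set.mem_inter_iff, Set.mem_insert_iff, Set.mem_singleton_iff]
          constructor
          · rintro ⟨hxs, h | h⟩
            · exact absurd (h ▸ hxs) hA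
            · exact h
          · rintro rfl
            exact ⟨hB, Or.inr rfl⟩
        rw [this]
        simp [Set.indicator_of_mem, Set.indicator_of_notMem, hA, hB]
      · have : s ∩ {a, b} = ∅ := by
          ext x
          simp only [Set.mem_inter_iff, Set.mem_insert_iff, Set.mem_singleton_iff,
            Set.mem_empty_iff_false, iff_false, not_and, not_or]
          intro hxs
          exact ⟨fun h => hA (h ▸ hxs), fun h => hB (h ▸ hxs)⟩
        rw [this]
        simp [Set.indicator_of_notMem, hA, hB]
    -- mass equation
    have hsum : μ {a} + μ {b} = ENNReal.ofReal c0 := by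
      have h := congrArg (fun ν : Measure ℝ => ν Set.univ) hμrep
      simp only [Measure.add_apply, Measure.smul_apply, smul_eq_mul,
        Measure.dirac_apply_of_mem (Set.mem_univ a),
        Measure.dirac_apply_of_mem (Set.mem_univ b), mul_one] at h
      rw [← h, hμuniv]
    have hfa : μ {a} ≠ ⊤ := measure_ne_top μ {a}
    have hfb : μ {b} ≠ ⊤ := measure_ne_top μ {b}
    have hsumR : (μ {a}).toReal + (μ {b}).toReal = c0 := by
      rw [← ENNReal.toReal_add hfa hfb, hsum, ENNReal.toReal_ofReal hc0]
    -- moment equation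
    have hIida : Integrable (fun x : ℝ => x) (Measure.dirac a) := by
      have h1 : (fun x : ℝ => x) =ᵐ[Measure.dirac a] fun _ => a := by
        rw [Filter.EventuallyEq, ae_dirac_eq]; simp
      exact (integrable_const a).congr h1.symm
    have hIidb : Integrable (fun x : ℝ => x) (Measure.dirac b) := by
      have h1 : (fun x : ℝ => x) =ᵐ[Measure.dirac b] fun _ => b := by
        rw [Filter.EventuallyEq, ae_dirac_eq]; simp
      exact (integrable_const b).congr h1.symm
    have hmomR : (μ {a}).toReal * a + (μ {b}).toReal * b = c1 := by
      have h := hmom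
      rw [hμrep] at h
      rw [integral_add_measure (hIida.smul_measure hfa) (hIidb.smul_measure hfb),
        integral_smul_measure, integral_smul_measure, integral_dirac,
        integral_dirac, smul_eq_mul, smul_eq_mul] at h
      exact h
    have hma : (μ {a}).toReal = (c0 * b - c1) / (b - a) := by
      field_simp
      linear_combination b * hsumR - hmomR
    have hmb : (μ {b}).toReal = (c1 - c0 * a) / (b - a) := by
      field_simp
      linear_combination hmomR - a * hsumR
    have ha' : μ {a} = ENNReal.ofReal ((c0 * b - c1) / (b - a)) := by
      rw [← hma, ENNReal.ofReal_toReal hfa]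
    have hb' : μ {b} = ENNReal.ofReal ((c1 - c0 * a) / (b - a)) := by
      rw [← hmb, ENNReal.ofReal_toReal hfb]
    rw [hμrep, ha', hb']
  · -- measure form implies equality
    intro hμ
    have hda : Integrable g2 (Measure.dirac a) := by
      have h1 : g2 =ᵐ[Measure.dirac a] fun _ => g2 a := by
        rw [Filter.EventuallyEq, ae_dirac_eq]
        simp
      exact (integrable_const (g2 a)).congr h1.symm
    have hdb : Integrable g2 (Measure.dirac b) := by
      have h1 : g2 =ᵐ[Measure.dirac b] fun _ => g2 b := by
        rw [Filter.EventuallyEq, ae_dirac_eq]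
        simp
      exact (integrable_const (g2 b)).congr h1.symm
    rw [hμ, integral_add_measure (hda.smul_measure ENNReal.ofReal_ne_top)
      (hdb.smul_measure ENNReal.ofReal_ne_top),
      integral_smul_measure, integral_smul_measure, integral_dirac, integral_dirac,
      ENNReal.toReal_ofReal hα0, ENNReal.toReal_ofReal hβ0]
    simp [smul_eq_mul]
end
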